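/- arXiv:1412.3341 — 5 statements merged into one kernel-verified Lean document; each statement's English description precedes it below -/
import Mathlib

section
/- Let M be a matroid on a finite ground set E and L a list assignment with all lists of size k. If M admits a proper coloring in which every element receives a color from {1,...,k} (equivalently, E can be partitioned into k independent sets), then M admits a proper coloring in which every element receives a color from its list L(e). (Seymour's theorem: ch(M) = χ(M).) -/
open Set

namespace SeymourAux

variable {α : Type*} {M : Matroid α} {I J X Y : Set α} {e : α}

noncomputable def rnk (M : Matroid α) (X : Set α) : ℕ := (M.exists_isBasis' X).choose.ncard

lemma basis'_ncard_eq (hI : M.IsBasis' I X) (hJ : M.IsBasis' J X) : I.ncard = J.ncard :=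
  (Matroid.isBase_restrict_iff'.2 hI).ncard_eq_ncard_of_isBase (Matroid.isBase_restrict_iff'.2 hJ)

lemma rnk_eq (hI : M.IsBasis' I X) : rnk M X = I.ncard :=
  basis'_ncard_eq (M.exists_isBasis' X).choose_spec hI

lemma rnk_indep (hI : M.Indep I) : rnk M I = I.ncard := rnk_eq hI.isBasis_self.isBasis'

lemma indep_ncard_le_rnk (hI : M.Indep I) (hIX : I ⊆ X) (hX : X.Finite) :
    I.ncard ≤ rnk M X := by
  obtain ⟨J, hJ, hIJ⟩ := hI.subset_isBasis'_of_subset hIX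
  rw [rnk_eq hJ]
  exact ncard_le_ncard hIJ (hX.subset hJ.subset)

lemma rnk_mono (hXY : X ⊆ Y) (hY : Y.Finite) : rnk M X ≤ rnk M Y := by
  obtain ⟨I, hI⟩ := M.exists_isBasis' X
  rw [rnk_eq hI]
  exact indep_ncard_le_rnk hI.indep (hI.subset.trans hXY) hY

lemma rnk_submod (hX : X.Finite) (hY : Y.Finite) :
    rnk M (X ∪ Y) + rnk M (X ∩ Y) ≤ rnk M X + rnk M Y := by
  obtain ⟨I, hI⟩ := M.exists_isBasis' (X ∩ Y)
  obtain ⟨J, hJ, hIJ⟩ := hI.indep.subset_isBasis'_of_subset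
    (hI.subset.trans (inter_subset_left.trans subset_union_left))
  have hJfin : J.Finite := (hX.union hY).subset hJ.subset
  rw [rnk_eq hJ, rnk_eq hI]
  have h1 : (J ∩ X).ncard + (J ∩ Y).ncard = J.ncard + (J ∩ (X ∩ Y)).ncard := by
    have := ncard_union_add_ncard_inter (J ∩ X) (J ∩ Y)
      (hJfin.subset inter_subset_left) (hJfin.subset inter_subset_left)
    rw [← inter_union_distrib_left, inter_eq_left.2 hJ.subset, ← inter_inter_distrib_left]
      at this
    exact this.symm
  have h2 : I.ncard ≤ (J ∩ (X ∩ Y)).ncard :=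
    ncard_le_ncard (subset_inter hIJ hI.subset) (hJfin.subset inter_subset_left)
  have h3 : (J ∩ X).ncard ≤ rnk M X :=
    indep_ncard_le_rnk (hJ.indep.inter_right X) inter_subset_right hX
  have h4 : (J ∩ Y).ncard ≤ rnk M Y :=
    indep_ncard_le_rnk (hJ.indep.inter_right Y) inter_subset_right hY
  omega

lemma rnk_insert_dep (hI : M.Indep I) (hdep : ¬ M.Indep (insert e I)) :
    rnk M (insert e I) = rnk M I := by
  obtain ⟨J, hJ, hIJ⟩ := hI.subset_isBasis'_of_subset (subset_insert e I)
  have hJI : J = I := by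
    by_contra hne
    have hJsub : J ⊆ insert e I := hJ.subset
    have heJ : e ∈ J := by
      by_contra heJ
      exact hne ((hIJ.antisymm
        (fun x hx => ((hJsub hx).resolve_left (by rintro rfl; exact heJ hx)))).symm)
    exact hdep (hJ.indep.subset (insert_subset heJ hIJ))
  rw [rnk_eq hJ, hJI, rnk_indep hI]

lemma rnk_insert_propagate (h : rnk M (insert e X) = rnk M X) (hXY : X ⊆ Y) (hY : Y.Finite) :
    rnk M (insert e Y) = rnk M Y := by
  refine le_antisymm ?_ (rnk_mono (subset_insert e Y) (hY.insert e))
  have hXfin : X.Finite := hY.subset hXY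
  have hsub := rnk_submod (M := M) (X := insert e X) (Y := Y) (hXfin.insert e) hY
  have h2 : rnk M X ≤ rnk M (insert e X ∩ Y) :=
    rnk_mono (subset_inter (subset_insert e X) hXY) ((hXfin.insert e).inter_of_left Y)
  have h3 : insert e X ∪ Y = insert e Y := by
    rw [insert_union, union_eq_self_of_subset_left hXY]
  rw [h3, h] at hsub
  omega

lemma finU (X : Finset α) (A : Set α) (C : Finset α) : ((↑X ∩ A) ∪ ↑C : Set α).Finite :=
  (X.finite_toSet.inter_of_left A).union C.finite_toSet

lemma sum_rnk_empty (M : Matroid α) (A : ℕ → Set α) (Γ : Finset ℕ) (C : ℕ → Finset α)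
    (hCind : ∀ γ ∈ Γ, M.Indep (C γ : Set α)) :
    ∑ γ ∈ Γ, rnk M ((↑(∅ : Finset α) ∩ A γ) ∪ ↑(C γ)) = ∑ γ ∈ Γ, (C γ).card :=
  Finset.sum_congr rfl fun γ hγ => by
    rw [show ((↑(∅ : Finset α) ∩ A γ) ∪ ↑(C γ) : Set α) = ↑(C γ) by simp,
      rnk_indep (hCind γ hγ), ncard_coe_finset]

lemma key (M : Matroid α) (A : ℕ → Set α) (Γ : Finset ℕ) (n : ℕ) :
    ∀ (S : Finset α) (C : ℕ → Finset α), S.card = n → ↑S ⊆ M.E →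
    (∀ γ ∈ Γ, M.Indep (C γ : Set α)) →
    (∀ γ ∈ Γ, Disjoint (C γ : Set α) (S : Set α)) →
    (∀ X : Finset α, X ⊆ S →
      X.card + ∑ γ ∈ Γ, (C γ).card ≤ ∑ γ ∈ Γ, rnk M ((↑X ∩ A γ) ∪ ↑(C γ))) →
    ∃ f : α → ℕ, (∀ x ∈ S, f x ∈ Γ ∧ x ∈ A (f x)) ∧
      ∀ γ ∈ Γ, M.Indep ({x ∈ (S : Set α) | f x = γ} ∪ ↑(C γ)) := by
  classical
  induction n using Nat.strong_induction_on with
  | _ n IH =>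
  intro S C hn hSE hCind hCdisj hOC
  rcases S.eq_empty_or_nonempty with hS | ⟨e, he⟩
  · subst hS
    refine ⟨fun _ => 0, by simp, fun γ hγ => ?_⟩
    have : ({x ∈ ((∅ : Finset α) : Set α) | (fun _ => (0:ℕ)) x = γ} ∪ ↑(C γ) : Set α)
        = ↑(C γ) := by simp
    rw [this]; exact hCind γ hγ
  · have hnpos : 0 < n := hn ▸ Finset.card_pos.2 ⟨e, he⟩
    have hS'card : (S.erase e).card = n - 1 := by rw [Finset.card_erase_of_mem he, hn]
    have hS'lt : n - 1 < n := by omega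
    have heC : ∀ γ ∈ Γ, e ∉ C γ := fun γ hγ h =>
      Set.disjoint_left.1 (hCdisj γ hγ) (Finset.mem_coe.2 h) (Finset.mem_coe.2 he)
    have hupdcard : ∀ γ0 ∈ Γ, ∑ δ ∈ Γ, ((Function.update C γ0 (insert e (C γ0))) δ).card
        = (∑ δ ∈ Γ, (C δ).card) + 1 := by
      intro γ0 hγ0
      rw [← Finset.add_sum_erase Γ _ hγ0,
        ← Finset.add_sum_erase Γ (fun δ => (C δ).card) hγ0]
      rw [Function.update_self, Finset.card_insert_of_notMem (heC γ0 hγ0)]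
      have : ∑ δ ∈ Γ.erase γ0, (Function.update C γ0 (insert e (C γ0)) δ).card
          = ∑ δ ∈ Γ.erase γ0, (C δ).card :=
        Finset.sum_congr rfl fun δ hδ => by
          rw [Function.update_of_ne (Finset.ne_of_mem_erase hδ)]
      omega
    by_cases hgood : ∃ γ0 ∈ Γ, e ∈ A γ0 ∧ M.Indep (insert e (↑(C γ0) : Set α)) ∧
        ∀ X : Finset α, X ⊆ S.erase e →
          X.card + ∑ δ ∈ Γ, ((Function.update C γ0 (insert e (C γ0))) δ).card ≤
            ∑ δ ∈ Γ, rnk M ((↑X ∩ A δ) ∪ ↑((Function.update C γ0 (insert e (C γ0))) δ))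
    · obtain ⟨γ0, hγ0, heA0, hind0, hOC'⟩ := hgood
      obtain ⟨f, hf1, hf2⟩ := IH (n - 1) hS'lt (S.erase e)
        (Function.update C γ0 (insert e (C γ0))) hS'card
        (fun x hx => hSE (Finset.erase_subset _ _ hx))
        (by
          intro γ hγ
          by_cases hγe : γ = γ0
          · subst hγe; rw [Function.update_self]; simpa using hind0
          · rw [Function.update_of_ne hγe]; exact hCind γ hγ)
        (by
          intro γ hγ
          by_cases hγe : γ = γ0
          · subst hγe
            rw [Function.update_self, Finset.coe_insert]
            refine Set.disjoint_left.2 fun x hx hxS' => ?_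
            rcases hx with rfl | hxC
            · exact Finset.notMem_erase x S (Finset.mem_coe.1 hxS')
            · exact Set.disjoint_left.1 (hCdisj γ hγ) hxC
                (Finset.mem_coe.2 (Finset.erase_subset _ _ (Finset.mem_coe.1 hxS')))
          · rw [Function.update_of_ne hγe]
            exact (hCdisj γ hγ).mono_right
              (Finset.coe_subset.2 (Finset.erase_subset _ _)))
        hOC'
      refine ⟨Function.update f e γ0, ?_, ?_⟩
      · intro x hx
        by_cases hxe : x = e
        · subst hxe; rw [Function.update_self]; exact ⟨hγ0, heA0⟩
        · rw [Function.update_of_ne hxe]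
          exact hf1 x (Finset.mem_erase.2 ⟨hxe, hx⟩)
      · intro γ hγ
        by_cases hγe : γ = γ0
        · subst hγe
          have hset : ({x ∈ (S : Set α) | Function.update f e γ x = γ} ∪ ↑(C γ) : Set α)
              = {x ∈ ((S.erase e : Finset α) : Set α) | f x = γ}
                ∪ ↑(Function.update C γ (insert e (C γ)) γ) := by
            rw [Function.update_self, Finset.coe_insert]
            ext x
            by_cases hxe : x = e
            · subst hxe
              simp [Function.update_self, he]
            · simp only [mem_union, mem_setOf_eq, Finset.coe_erase, mem_diff,
                mem_singleton_iff, Function.update_of_ne hxe, mem_insert_iff, hxe,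
                Finset.mem_coe]
              tauto
          rw [hset]
          exact hf2 γ hγ
        · have hset : ({x ∈ (S : Set α) | Function.update f e γ0 x = γ} : Set α)
              = {x ∈ ((S.erase e : Finset α) : Set α) | f x = γ} := by
            ext x
            by_cases hxe : x = e
            · subst hxe
              have hne : γ0 ≠ γ := fun h => hγe h.symm
              simp only [mem_setOf_eq, Function.update_self, Finset.coe_erase, mem_diff,
                mem_singleton_iff, Finset.mem_coe, Finset.mem_erase]
              tauto
            · simp [Function.update_of_ne hxe, hxe]
          have h2 := hf2 γ hγ
          rw [Function.update_of_ne hγe] at h2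
          rw [hset]
          exact h2
    · push_neg at hgood
      exfalso
      -- for each γ produce a tight set with the rank-stability property
      have hXg : ∀ γ, ∃ T : Finset α, T ⊆ S.erase e ∧
          (T.card + ∑ δ ∈ Γ, (C δ).card = ∑ δ ∈ Γ, rnk M ((↑T ∩ A δ) ∪ ↑(C δ))) ∧
          (γ ∈ Γ → e ∈ A γ →
            rnk M (insert e ((↑T ∩ A γ) ∪ ↑(C γ))) = rnk M ((↑T ∩ A γ) ∪ ↑(C γ))) := by
        intro γ
        have htight0 : (∅ : Finset α).card + ∑ δ ∈ Γ, (C δ).card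
            = ∑ δ ∈ Γ, rnk M ((↑(∅ : Finset α) ∩ A δ) ∪ ↑(C δ)) := by
          rw [sum_rnk_empty M A Γ C hCind, Finset.card_empty, zero_add]
        by_cases hγΓ : γ ∈ Γ
        · by_cases heA : e ∈ A γ
          · by_cases hind : M.Indep (insert e (↑(C γ) : Set α))
            · obtain ⟨X, hXsub, hXlt⟩ := hgood γ hγΓ heA hind
              have hOCX := hOC X (hXsub.trans (Finset.erase_subset _ _))
              rw [hupdcard γ hγΓ] at hXlt
              have hT' : ∑ δ ∈ Γ.erase γ,
                  rnk M ((↑X ∩ A δ) ∪ ↑(Function.update C γ (insert e (C γ)) δ))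
                  = ∑ δ ∈ Γ.erase γ, rnk M ((↑X ∩ A δ) ∪ ↑(C δ)) :=
                Finset.sum_congr rfl fun δ hδ => by
                  rw [Function.update_of_ne (Finset.ne_of_mem_erase hδ)]
              have hr1 : ((↑X ∩ A γ) ∪ ↑(Function.update C γ (insert e (C γ)) γ) : Set α)
                  = insert e ((↑X ∩ A γ) ∪ ↑(C γ)) := by
                rw [Function.update_self, Finset.coe_insert, union_insert]
              have hsplit1 : ∑ δ ∈ Γ,
                  rnk M ((↑X ∩ A δ) ∪ ↑(Function.update C γ (insert e (C γ)) δ))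
                  = rnk M (insert e ((↑X ∩ A γ) ∪ ↑(C γ)))
                    + ∑ δ ∈ Γ.erase γ, rnk M ((↑X ∩ A δ) ∪ ↑(C δ)) := by
                rw [← Finset.add_sum_erase Γ
                  (fun δ => rnk M ((↑X ∩ A δ) ∪ ↑(Function.update C γ (insert e (C γ)) δ)))
                  hγΓ]
                rw [hr1, hT']
              have hsplit2 : ∑ δ ∈ Γ, rnk M ((↑X ∩ A δ) ∪ ↑(C δ))
                  = rnk M ((↑X ∩ A γ) ∪ ↑(C γ))
                    + ∑ δ ∈ Γ.erase γ, rnk M ((↑X ∩ A δ) ∪ ↑(C δ)) :=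
                (Finset.add_sum_erase Γ (fun δ => rnk M ((↑X ∩ A δ) ∪ ↑(C δ))) hγΓ).symm
              rw [hsplit1] at hXlt
              rw [hsplit2] at hOCX
              have hmono : rnk M ((↑X ∩ A γ) ∪ ↑(C γ))
                  ≤ rnk M (insert e ((↑X ∩ A γ) ∪ ↑(C γ))) :=
                rnk_mono (subset_insert _ _) ((finU X (A γ) (C γ)).insert e)
              refine ⟨X, hXsub, ?_, fun _ _ => ?_⟩
              · rw [hsplit2]
                omega
              · omega
            · refine ⟨∅, Finset.empty_subset _, htight0, fun _ _ => ?_⟩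
              rw [show ((↑(∅ : Finset α) ∩ A γ) ∪ ↑(C γ) : Set α) = ↑(C γ) by simp]
              exact rnk_insert_dep (hCind γ hγΓ) hind
          · exact ⟨∅, Finset.empty_subset _, htight0, fun _ h => absurd h heA⟩
        · exact ⟨∅, Finset.empty_subset _, htight0, fun h _ => absurd h hγΓ⟩
      choose Xg hXg1 hXg2 hXg3 using hXg
      -- union of tight sets is tight
      have hunion : ∀ T T' : Finset α, T ⊆ S.erase e → T' ⊆ S.erase e →
          (T.card + ∑ δ ∈ Γ, (C δ).card = ∑ δ ∈ Γ, rnk M ((↑T ∩ A δ) ∪ ↑(C δ))) →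
          (T'.card + ∑ δ ∈ Γ, (C δ).card = ∑ δ ∈ Γ, rnk M ((↑T' ∩ A δ) ∪ ↑(C δ))) →
          ((T ∪ T').card + ∑ δ ∈ Γ, (C δ).card
            = ∑ δ ∈ Γ, rnk M ((↑(T ∪ T') ∩ A δ) ∪ ↑(C δ))) := by
        intro T T' hTs hT's htT htT'
        have hsub : ∀ δ ∈ Γ,
            rnk M ((↑(T ∪ T') ∩ A δ) ∪ ↑(C δ)) + rnk M ((↑(T ∩ T') ∩ A δ) ∪ ↑(C δ))
              ≤ rnk M ((↑T ∩ A δ) ∪ ↑(C δ)) + rnk M ((↑T' ∩ A δ) ∪ ↑(C δ)) := by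
          intro δ _
          have h := rnk_submod (M := M) (X := (↑T ∩ A δ) ∪ ↑(C δ))
            (Y := (↑T' ∩ A δ) ∪ ↑(C δ)) (finU T (A δ) (C δ)) (finU T' (A δ) (C δ))
          have he1 : (((↑T ∩ A δ) ∪ ↑(C δ)) ∪ ((↑T' ∩ A δ) ∪ ↑(C δ)) : Set α)
              = (↑(T ∪ T') ∩ A δ) ∪ ↑(C δ) := by
            rw [Finset.coe_union]
            ext x; simp only [mem_union, mem_inter_iff, Finset.mem_coe]; tauto
          have he2 : ((↑(T ∩ T') ∩ A δ) ∪ ↑(C δ) : Set α)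
              ⊆ ((↑T ∩ A δ) ∪ ↑(C δ)) ∩ ((↑T' ∩ A δ) ∪ ↑(C δ)) := by
            intro x hx
            simp only [Finset.coe_inter, mem_union, mem_inter_iff, Finset.mem_coe] at hx ⊢
            tauto
          have h2 := rnk_mono (M := M) he2 ((finU T (A δ) (C δ)).inter_of_left _)
          rw [he1] at h
          omega
        have hsum := Finset.sum_le_sum hsub
        rw [Finset.sum_add_distrib, Finset.sum_add_distrib] at hsum
        have h1 := hOC (T ∪ T')
          ((Finset.union_subset hTs hT's).trans (Finset.erase_subset _ _))
        have h2 := hOC (T ∩ T')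
          ((Finset.inter_subset_left.trans hTs).trans (Finset.erase_subset _ _))
        have hcards := Finset.card_union_add_card_inter T T'
        omega
      have hXsprop : ∀ s : Finset ℕ, s.biUnion Xg ⊆ S.erase e ∧
          ((s.biUnion Xg).card + ∑ δ ∈ Γ, (C δ).card
            = ∑ δ ∈ Γ, rnk M ((↑(s.biUnion Xg) ∩ A δ) ∪ ↑(C δ))) := by
        intro s
        induction s using Finset.induction_on with
        | empty =>
          refine ⟨by simp, ?_⟩
          rw [Finset.biUnion_empty, sum_rnk_empty M A Γ C hCind, Finset.card_empty, zero_add]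
        | @insert a s ha ih =>
          rw [Finset.biUnion_insert]
          exact ⟨Finset.union_subset (hXg1 a) ih.1,
            hunion _ _ (hXg1 a) ih.1 (hXg2 a) ih.2⟩
      obtain ⟨hXsS, hXstight⟩ := hXsprop Γ
      set Xs := Γ.biUnion Xg with hXsdef
      have hprop : ∀ γ ∈ Γ, e ∈ A γ →
          rnk M (insert e ((↑Xs ∩ A γ) ∪ ↑(C γ))) = rnk M ((↑Xs ∩ A γ) ∪ ↑(C γ)) := by
        intro γ hγ heA
        refine rnk_insert_propagate (hXg3 γ hγ heA) ?_ (finU Xs (A γ) (C γ))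
        have hsub : (↑(Xg γ) : Set α) ⊆ ↑Xs :=
          Finset.coe_subset.2 (Finset.subset_biUnion_of_mem Xg hγ)
        exact union_subset_union_left _ (inter_subset_inter_left _ hsub)
      have hfinal := hOC (insert e Xs)
        (Finset.insert_subset he (hXsS.trans (Finset.erase_subset _ _)))
      have heXs : e ∉ Xs := fun h => Finset.notMem_erase e S (hXsS h)
      rw [Finset.card_insert_of_notMem heXs] at hfinal
      have hsums : ∑ δ ∈ Γ, rnk M ((↑(insert e Xs) ∩ A δ) ∪ ↑(C δ))
          = ∑ δ ∈ Γ, rnk M ((↑Xs ∩ A δ) ∪ ↑(C δ)) := by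
        refine Finset.sum_congr rfl fun δ hδ => ?_
        by_cases heA : e ∈ A δ
        · rw [show ((↑(insert e Xs) ∩ A δ) ∪ ↑(C δ) : Set α)
              = insert e ((↑Xs ∩ A δ) ∪ ↑(C δ)) by
            rw [Finset.coe_insert, Set.insert_inter_of_mem heA, insert_union]]
          exact hprop δ hδ heA
        · rw [Finset.coe_insert, Set.insert_inter_of_notMem heA]
      rw [hsums] at hfinal
      omega

end SeymourAux
section Main

open Set SeymourAux

/-- Seymour's theorem: if a matroid on a finite ground set can be properly colored
with colors `{1, ..., k}` (i.e. the ground set partitions into `k` independent sets),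
then it is colorable from any list assignment with all lists of size `k`. -/
theorem seymour_list_coloring {α : Type*} (M : Matroid α) (hfin : M.E.Finite)
    (k : ℕ) (L : α → Finset ℕ) (hL : ∀ e ∈ M.E, (L e).card = k)
    (hcol : ∃ c : α → ℕ, (∀ e ∈ M.E, c e ∈ Finset.Icc 1 k) ∧
      ∀ i : ℕ, M.Indep {e ∈ M.E | c e = i}) :
    ∃ c : α → ℕ, (∀ e ∈ M.E, c e ∈ L e) ∧
      ∀ i : ℕ, M.Indep {e ∈ M.E | c e = i} := by
  classical
  obtain ⟨c, hc1, hc2⟩ := hcol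
  rcases Nat.eq_zero_or_pos k with hk0 | hk
  · subst hk0
    have hE : M.E = ∅ := by
      ext x
      simp only [Set.mem_empty_iff_false, iff_false]
      intro hx
      simpa using hc1 x hx
    refine ⟨fun _ => 0, fun e he => absurd (hE ▸ he) (Set.notMem_empty e), fun i => ?_⟩
    have h0 : {e ∈ M.E | (fun _ => (0:ℕ)) e = i} = ∅ := by
      ext x; simp [hE]
    rw [h0]; exact M.empty_indep
  · set S : Finset α := hfin.toFinset with hSdef
    have hScoe : (S : Set α) = M.E := hfin.coe_toFinset
    set Γ : Finset ℕ := S.biUnion L with hΓdef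
    set A : ℕ → Set α := fun γ => {x ∈ M.E | γ ∈ L x} with hAdef
    have hLsub : ∀ x ∈ M.E, L x ⊆ Γ := fun x hx γ hγ =>
      Finset.mem_biUnion.2 ⟨x, hfin.mem_toFinset.2 hx, hγ⟩
    have step1 : ∀ Y : Finset α, (↑Y : Set α) ⊆ M.E → Y.card ≤ k * rnk M ↑Y := by
      intro Y hY
      have hsub : Y ⊆ (Finset.Icc 1 k).biUnion (fun i => Y.filter (fun x => c x = i)) :=
        fun x hx => Finset.mem_biUnion.2
          ⟨c x, hc1 x (hY hx), Finset.mem_filter.2 ⟨hx, rfl⟩⟩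
      calc Y.card ≤ ((Finset.Icc 1 k).biUnion (fun i => Y.filter (fun x => c x = i))).card :=
            Finset.card_le_card hsub
        _ ≤ ∑ i ∈ Finset.Icc 1 k, (Y.filter (fun x => c x = i)).card :=
            Finset.card_biUnion_le
        _ ≤ ∑ i ∈ Finset.Icc 1 k, rnk M ↑Y := by
            refine Finset.sum_le_sum fun i _ => ?_
            rw [← ncard_coe_finset]
            refine indep_ncard_le_rnk ((hc2 i).subset ?_)
              (by intro x hx
                  simp only [Finset.coe_filter, Set.mem_setOf_eq] at hx
                  exact hx.1) Y.finite_toSet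
            intro x hx
            simp only [Finset.coe_filter, Set.mem_setOf_eq] at hx
            exact ⟨hY (Finset.mem_coe.2 hx.1), hx.2⟩
        _ = k * rnk M ↑Y := by
            rw [Finset.sum_const, Nat.card_Icc, Nat.add_sub_cancel, smul_eq_mul]
    have hOC : ∀ X : Finset α, X ⊆ S →
        X.card + ∑ γ ∈ Γ, ((fun _ => (∅ : Finset α)) γ).card ≤
          ∑ γ ∈ Γ, rnk M ((↑X ∩ A γ) ∪ ↑((fun _ => (∅ : Finset α)) γ)) := by
      intro X hX
      simp only [Finset.card_empty, Finset.sum_const_zero, add_zero, Finset.coe_empty,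
        Set.union_empty]
      have hXE : (↑X : Set α) ⊆ M.E := by rw [← hScoe]; exact Finset.coe_subset.2 hX
      have key1 : ∀ γ ∈ Γ, (X.filter (fun x => γ ∈ L x)).card ≤ k * rnk M (↑X ∩ A γ) := by
        intro γ _
        have hcoe : (↑(X.filter (fun x => γ ∈ L x)) : Set α) = ↑X ∩ A γ := by
          ext x
          simp only [Finset.coe_filter, Set.mem_setOf_eq, Set.mem_inter_iff,
            Finset.mem_coe, hAdef]
          constructor
          · rintro ⟨hx, hγ⟩; exact ⟨hx, hXE (Finset.mem_coe.2 hx), hγ⟩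
          · rintro ⟨hx, -, hγ⟩; exact ⟨hx, hγ⟩
        have := step1 (X.filter (fun x => γ ∈ L x))
          (by rw [hcoe]; exact fun x hx => hx.2.1)
        rwa [hcoe] at this
      have key2 : k * X.card = ∑ γ ∈ Γ, (X.filter (fun x => γ ∈ L x)).card := by
        calc k * X.card = ∑ x ∈ X, k := by rw [Finset.sum_const, smul_eq_mul, mul_comm]
          _ = ∑ x ∈ X, (Γ.filter (fun γ => γ ∈ L x)).card := by
              refine Finset.sum_congr rfl fun x hx => ?_
              rw [Finset.filter_mem_eq_inter,
                Finset.inter_eq_right.2 (hLsub x (hXE (Finset.mem_coe.2 hx))),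
                hL x (hXE (Finset.mem_coe.2 hx))]
          _ = ∑ x ∈ X, ∑ γ ∈ Γ, if γ ∈ L x then 1 else 0 :=
              Finset.sum_congr rfl fun x _ => Finset.card_filter _ _
          _ = ∑ γ ∈ Γ, ∑ x ∈ X, if γ ∈ L x then 1 else 0 := Finset.sum_comm
          _ = ∑ γ ∈ Γ, (X.filter (fun x => γ ∈ L x)).card :=
              Finset.sum_congr rfl fun γ _ => (Finset.card_filter _ _).symm
      have hle : k * X.card ≤ k * ∑ γ ∈ Γ, rnk M (↑X ∩ A γ) := by
        rw [key2, Finset.mul_sum]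
        exact Finset.sum_le_sum key1
      exact Nat.le_of_mul_le_mul_left hle hk
    obtain ⟨f, hf1, hf2⟩ := key M A Γ S.card S (fun _ => ∅) rfl (by rw [hScoe])
      (by simp) (by simp) hOC
    refine ⟨f, ?_, ?_⟩
    · intro x hx
      exact ((hf1 x (by rw [← hScoe] at hx; exact hx)).2).2
    · intro i
      by_cases hiΓ : i ∈ Γ
      · have h := hf2 i hiΓ
        rw [Finset.coe_empty, Set.union_empty, hScoe] at h
        exact h
      · have h0 : {e ∈ M.E | f e = i} = ∅ := by
          ext x
          simp only [Set.mem_setOf_eq, Set.mem_empty_iff_false, iff_false, not_and]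
          rintro hx rfl
          exact hiΓ (hf1 x (by rw [← hScoe] at hx; exact hx)).1
        rw [h0]; exact M.empty_indep

end Main
end

section
/- Let M be a matroid on a finite ground set E and ℓ : E → ℕ a function. If M is colorable from the lists L_ℓ(e) = {1, ..., ℓ(e)}, then M is colorable from every list assignment L with |L(e)| = ℓ(e) for all e ∈ E. -/
open Set

namespace ListColorAux

variable {α : Type*} {M : Matroid α} {I J A X Y : Set α}

/-- The rank (as `ℕ∞`) of a set in a matroid, via a choice of basis. -/
noncomputable def rk (M : Matroid α) (X : Set α) : ℕ∞ :=
  (M.exists_isBasis' X).choose.encard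

lemma rk_eq_of_basis' (h : M.IsBasis' I X) : rk M X = I.encard :=
  (M.exists_isBasis' X).choose_spec.encard_eq_encard h

lemma encard_le_rk (hI : M.Indep I) (hIX : I ⊆ X) : I.encard ≤ rk M X := by
  obtain ⟨J, hJ, hIJ⟩ := hI.subset_isBasis'_of_subset hIX
  rw [rk_eq_of_basis' hJ]
  exact Set.encard_le_encard hIJ

lemma rk_mono (h : X ⊆ Y) : rk M X ≤ rk M Y := by
  obtain ⟨I, hI⟩ := M.exists_isBasis' X
  rw [rk_eq_of_basis' hI]
  exact encard_le_rk hI.indep (hI.subset.trans h)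

lemma rk_eq_of_spanning (hI : M.Indep I) (hIX : I ⊆ X) (hXI : X ⊆ M.closure I) :
    rk M X = I.encard :=
  (hI.isBasis_of_subset_of_subset_closure hIX hXI).isBasis' |> rk_eq_of_basis'

lemma rk_submod (M : Matroid α) (X Y : Set α) :
    rk M (X ∪ Y) + rk M (X ∩ Y) ≤ rk M X + rk M Y := by
  obtain ⟨I, hI⟩ := M.exists_isBasis' (X ∩ Y)
  obtain ⟨JX, hJX, hIJX⟩ := hI.indep.subset_isBasis'_of_subset
    (hI.subset.trans inter_subset_left)
  obtain ⟨J, hJ, hJXJ⟩ := hJX.indep.subset_isBasis'_of_subset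
    (hJX.subset.trans subset_union_left)
  have hJresX : J ∩ X = JX := by
    refine (hJX.eq_of_subset_indep (hJ.indep.subset inter_subset_left)
      (subset_inter hJXJ hJX.subset) inter_subset_right).symm
  have hcount : (J ∩ X).encard + (J ∩ Y).encard = J.encard + (J ∩ (X ∩ Y)).encard := by
    rw [← Set.encard_union_add_encard_inter]
    congr 2
    · rw [← inter_union_distrib_left, inter_eq_self_of_subset_left hJ.subset]
    · rw [← inter_inter_distrib_left]
  have h1 : rk M (X ∪ Y) + rk M (X ∩ Y) ≤ (J ∩ X).encard + (J ∩ Y).encard := by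
    rw [hcount, rk_eq_of_basis' hJ, rk_eq_of_basis' hI]
    gcongr
    exact subset_inter (hIJX.trans hJXJ) hI.subset
  refine h1.trans ?_
  gcongr
  · rw [hJresX, rk_eq_of_basis' hJX]
  · exact encard_le_rk (hJ.indep.subset inter_subset_left) inter_subset_right


lemma hrk_empty : rk M (∅ : Set α) = 0 := by
  obtain ⟨I, hI⟩ := M.exists_isBasis' (∅ : Set α)
  rw [rk_eq_of_basis' hI, Set.subset_empty_iff.mp hI.subset, Set.encard_empty]

/-- The "fundamental circuit minus `x`": the minimal subset of `I` whose closure contains `x`. -/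
def fund (M : Matroid α) (x : α) (I : Set α) : Set α :=
  ⋂₀ {A | A ⊆ I ∧ x ∈ M.closure A}

lemma fund_subset (hx : x ∈ M.closure I) : fund M x I ⊆ I :=
  sInter_subset_of_mem ⟨Subset.rfl, hx⟩

lemma fund_min (hA : A ⊆ I) (hx : x ∈ M.closure A) : fund M x I ⊆ A :=
  sInter_subset_of_mem ⟨hA, hx⟩

lemma mem_closure_fund (hI : M.Indep I) (hx : x ∈ M.closure I) :
    x ∈ M.closure (fund M x I) := by
  have hne : {A | A ⊆ I ∧ x ∈ M.closure A}.Nonempty := ⟨I, Subset.rfl, hx⟩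
  rw [fund, hI.closure_sInter_eq_biInter_closure_of_forall_subset hne (fun J hJ => hJ.1)]
  exact mem_iInter₂.2 fun A hA => hA.2

lemma not_mem_closure_diff_of_mem_fund (hI : M.Indep I) (hx : x ∈ M.closure I)
    (hy : y ∈ fund M x I) : x ∉ M.closure (I \ {y}) := by
  intro hcl
  exact (fund_min diff_subset hcl hy).2 rfl

/-- The basic exchange: swapping `y ∈ fund M x I` for `x` preserves independence. -/
lemma indep_swap (hI : M.Indep I) (hx : x ∈ M.closure I) (hxI : x ∉ I)
    (hy : y ∈ fund M x I) : M.Indep (insert x (I \ {y})) := by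
  have hd : M.Indep (I \ {y}) := hI.subset diff_subset
  rw [hd.insert_indep_iff_of_notMem (by simp [hxI])]
  exact ⟨M.closure_subset_ground I hx, not_mem_closure_diff_of_mem_fund hI hx hy⟩

/-- Fundamental circuits are preserved when passing to another independent set
containing them. -/
lemma fund_eq_of_subset (hI : M.Indep I) (hx : x ∈ M.closure I) (hJ : M.Indep J)
    (hsub : fund M x I ⊆ J) : fund M x J = fund M x I := by
  have hxJ : x ∈ M.closure J :=
    M.closure_subset_closure hsub (mem_closure_fund hI hx)
  apply subset_antisymm
  · exact fund_min hsub (mem_closure_fund hI hx)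
  · -- fund M x I ⊆ fund M x J : fund M x J ⊆ fund M x I ⊆ I and spans x
    exact fund_min ((fund_min hsub (mem_closure_fund hI hx)).trans (fund_subset hx))
      (mem_closure_fund hJ hxJ)


/-- Krogdahl-type simultaneous exchange lemma. -/
lemma krogdahl (n : ℕ) : ∀ (I : Set α) (T : Finset ℕ) (x y : ℕ → α), T.card = n →
    M.Indep I →
    (∀ t ∈ T, x t ∉ I ∧ x t ∈ M.closure I ∧ y t ∈ fund M (x t) I) →
    Set.InjOn x T → Set.InjOn y T →
    (∀ s ∈ T, ∀ t ∈ T, s < t → y t ∉ fund M (x s) I) →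
    M.Indep ((I \ (y '' T)) ∪ x '' T) := by
  induction n with
  | zero =>
    intro I T x y hcard hI _ _ _ _
    rw [Finset.card_eq_zero] at hcard
    subst hcard
    simpa using hI
  | succ n IH =>
    intro I T x y hcard hI hedge hxinj hyinj hback
    have hTne : T.Nonempty := Finset.card_pos.mp (by omega)
    set t₀ := T.max' hTne with ht₀
    have ht₀T : t₀ ∈ T := T.max'_mem hTne
    obtain ⟨hx₀I, hx₀cl, hy₀⟩ := hedge t₀ ht₀T
    set J := insert (x t₀) (I \ {y t₀}) with hJdef
    have hJ : M.Indep J := indep_swap hI hx₀cl hx₀I hy₀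
    set T' := T.erase t₀ with hT'
    have hT'card : T'.card = n := by
      rw [hT', Finset.card_erase_of_mem ht₀T, hcard]; omega
    have hfsubJ : ∀ t ∈ T', fund M (x t) I ⊆ J := by
      intro t htT' z hz
      have htT := Finset.mem_of_mem_erase htT'
      have hlt : t < t₀ := lt_of_le_of_ne (T.le_max' t htT) (Finset.ne_of_mem_erase htT')
      obtain ⟨hxI, hxcl, hy⟩ := hedge t htT
      have hzI : z ∈ I := fund_subset hxcl hz
      have hzy : z ≠ y t₀ := fun h => hback t htT t₀ ht₀T hlt (h ▸ hz)
      exact Or.inr ⟨hzI, hzy⟩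
    have hfundeq : ∀ t ∈ T', fund M (x t) J = fund M (x t) I := by
      intro t htT'
      obtain ⟨hxI, hxcl, hy⟩ := hedge t (Finset.mem_of_mem_erase htT')
      exact fund_eq_of_subset hI hxcl hJ (hfsubJ t htT')
    have hmain : M.Indep ((J \ (y '' T')) ∪ x '' T') := by
      refine IH J T' x y hT'card hJ ?_ (hxinj.mono (by simp [hT', Finset.coe_subset]))
        (hyinj.mono (by simp [hT'])) ?_
      · intro t htT'
        have htT := Finset.mem_of_mem_erase htT'
        obtain ⟨hxI, hxcl, hy⟩ := hedge t htT
        have hfe := hfundeq t htT'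
        refine ⟨?_, ?_, ?_⟩
        · -- x t ∉ J
          rintro (h | ⟨hI', -⟩)
          · exact (Finset.ne_of_mem_erase htT')
              (hxinj (by simpa using htT) (by simpa using ht₀T) h)
          · exact hxI hI'
        · -- x t ∈ closure J
          exact M.closure_subset_closure (hfsubJ t htT') (mem_closure_fund hI hxcl)
        · rw [hfe]; exact hy
      · intro s hs t ht hlt
        rw [hfundeq s hs]
        exact hback s (Finset.mem_of_mem_erase hs) t (Finset.mem_of_mem_erase ht) hlt
    have hyI : (y '' (T' : Set ℕ)) ⊆ I := by
      rintro - ⟨t, ht', rfl⟩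
      have ht : t ∈ T' := by simpa using ht'
      have htT : t ∈ T := Finset.mem_of_mem_erase ht
      obtain ⟨-, hxcl, hy⟩ := hedge t htT
      exact fund_subset hxcl hy
    have hTT' : (T : Set ℕ) = insert t₀ (T' : Set ℕ) := by
      rw [hT', Finset.coe_erase, Set.insert_diff_singleton]
      exact (Set.insert_eq_self.2 (by simpa using ht₀T)).symm
    have hset : ((J \ (y '' T')) ∪ x '' T') = ((I \ (y '' T)) ∪ x '' T) := by
      rw [hTT', Set.image_insert_eq, Set.image_insert_eq, hJdef]
      rw [Set.insert_diff_of_notMem _ (fun h => hx₀I (hyI h))]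
      rw [Set.diff_diff_comm (t := {y t₀})]
      rw [show (I \ y '' ↑T') \ {y t₀} = I \ insert (y t₀) (y '' ↑T') by
        rw [Set.diff_diff]; simp [Set.union_comm]]
      rw [Set.insert_union]
      rw [Set.union_insert]
    rwa [hset] at hmain


open scoped Classical in
/-- Number of indices `i ∈ 𝒞` with `e ∈ F i`. -/
noncomputable def cover (𝒞 : Finset ℕ) (F : ℕ → Set α) (e : α) : ℕ :=
  (𝒞.filter (fun i => e ∈ F i)).card

lemma cover_exists {𝒞 : Finset ℕ} {F : ℕ → Set α} {e : α} (h : 1 ≤ cover 𝒞 F e) :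
    ∃ i ∈ 𝒞, e ∈ F i := by
  classical
  rw [cover, Nat.one_le_iff_ne_zero, ← Nat.pos_iff_ne_zero, Finset.card_pos] at h
  obtain ⟨i, hi⟩ := h
  rw [Finset.mem_filter] at hi
  exact ⟨i, hi.1, hi.2⟩

lemma cover_erase_mem {𝒞 : Finset ℕ} {F : ℕ → Set α} {e : α} {i₀ : ℕ} (h₀ : i₀ ∈ 𝒞)
    (he : e ∈ F i₀) : cover 𝒞 F e = cover (𝒞.erase i₀) F e + 1 := by
  classical
  rw [cover, cover]
  rw [show (𝒞.erase i₀).filter (fun i => e ∈ F i) = (𝒞.filter (fun i => e ∈ F i)).erase i₀ by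
    ext j; simp [Finset.mem_filter, Finset.mem_erase]; tauto]
  rw [Finset.card_erase_of_mem (by simp [Finset.mem_filter, h₀, he])]
  have : 0 < (𝒞.filter (fun i => e ∈ F i)).card :=
    Finset.card_pos.2 ⟨i₀, by simp [Finset.mem_filter, h₀, he]⟩
  omega

lemma cover_erase_not_mem {𝒞 : Finset ℕ} {F : ℕ → Set α} {e : α} {i₀ : ℕ}
    (he : e ∉ F i₀) : cover (𝒞.erase i₀) F e = cover 𝒞 F e := by
  classical
  rw [cover, cover]
  congr 1
  ext j
  simp only [Finset.mem_filter, Finset.mem_erase]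
  constructor
  · tauto
  · rintro ⟨hj, hef⟩
    exact ⟨⟨fun h => he (h ▸ hef), hj⟩, hef⟩

/-- The nested case of the uncrossing argument. -/
lemma uncross_nested (M : Matroid α) (hX : X.Finite) :
    ∀ (n : ℕ) (𝒞 : Finset ℕ) (F : ℕ → Set α) (K : ℕ), 𝒞.card = n →
    (∀ i ∈ 𝒞, ∀ j ∈ 𝒞, F i ⊆ F j ∨ F j ⊆ F i) →
    (∀ i ∈ 𝒞, F i ⊆ X) →
    ∑ j ∈ Finset.range K, rk M {e ∈ X | j + 1 ≤ cover 𝒞 F e} ≤ ∑ i ∈ 𝒞, rk M (F i) := by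
  intro n
  induction n with
  | zero =>
    intro 𝒞 F K hcard _ _
    rw [Finset.card_eq_zero] at hcard
    subst hcard
    have : ∀ j ∈ Finset.range K, rk M {e ∈ X | j + 1 ≤ cover (∅ : Finset ℕ) F e} = rk M ∅ := by
      intro j _
      congr 1
      ext e
      simp [cover]
    rw [Finset.sum_congr rfl this]
    simp [hrk_empty]
  | succ n IH =>
    intro 𝒞 F K hcard hnest hFX
    have h𝒞ne : 𝒞.Nonempty := Finset.card_pos.mp (by omega)
    -- pick i₀ with (F i₀).ncard maximal; then F i ⊆ F i₀ for all i
    obtain ⟨i₀, hi₀, hmax⟩ := Finset.exists_max_image 𝒞 (fun i => (F i).ncard) h𝒞ne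
    have htop : ∀ i ∈ 𝒞, F i ⊆ F i₀ := by
      intro i hi
      rcases hnest i hi i₀ hi₀ with h | h
      · exact h
      · exact (Set.eq_of_subset_of_ncard_le h (hmax i hi) ((hX.subset (hFX i hi)))).symm.subset
    cases K with
    | zero => simp
    | succ K =>
      have hstep : ∀ j : ℕ, {e ∈ X | (j + 1) + 1 ≤ cover 𝒞 F e}
          = {e ∈ X | j + 1 ≤ cover (𝒞.erase i₀) F e} := by
        intro j
        ext e
        simp only [Set.mem_setOf_eq, and_congr_right_iff]
        intro heX
        by_cases he : e ∈ F i₀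
        · rw [cover_erase_mem hi₀ he]; omega
        · rw [cover_erase_not_mem he]
          have : cover 𝒞 F e = 0 := by
            by_contra h
            obtain ⟨i, hi, hei⟩ := cover_exists (Nat.one_le_iff_ne_zero.2 h)
            exact he (htop i hi hei)
          omega
      rw [Finset.sum_range_succ' (fun j => rk M {e ∈ X | j + 1 ≤ cover 𝒞 F e}) K]
      have h1 : rk M {e ∈ X | 0 + 1 ≤ cover 𝒞 F e} ≤ rk M (F i₀) := by
        refine rk_mono ?_
        rintro e ⟨heX, hc⟩
        obtain ⟨i, hi, hei⟩ := cover_exists hc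
        exact htop i hi hei
      have h2 : ∑ j ∈ Finset.range K, rk M {e ∈ X | (j + 1) + 1 ≤ cover 𝒞 F e}
          ≤ ∑ i ∈ 𝒞.erase i₀, rk M (F i) := by
        rw [Finset.sum_congr rfl (fun j _ => by rw [hstep j])]
        exact IH (𝒞.erase i₀) F K (by rw [Finset.card_erase_of_mem hi₀, hcard]; omega)
          (fun i hi j hj => hnest i (Finset.mem_of_mem_erase hi) j (Finset.mem_of_mem_erase hj))
          (fun i hi => hFX i (Finset.mem_of_mem_erase hi))
      calc ∑ j ∈ Finset.range K, rk M {e ∈ X | (j + 1) + 1 ≤ cover 𝒞 F e}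
            + rk M {e ∈ X | 0 + 1 ≤ cover 𝒞 F e}
          ≤ (∑ i ∈ 𝒞.erase i₀, rk M (F i)) + rk M (F i₀) := by gcongr
        _ = ∑ i ∈ 𝒞, rk M (F i) := Finset.sum_erase_add 𝒞 _ hi₀

/-- The uncrossing lemma: among families with a given coverage function,
nested families minimise the sum of ranks. -/
lemma uncross (M : Matroid α) (hX : X.Finite) :
    ∀ (μ : ℕ) (𝒞 : Finset ℕ) (F : ℕ → Set α) (K : ℕ),
    (∑ i ∈ 𝒞, (X.ncard ^ 2 - (F i).ncard ^ 2)) = μ →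
    (∀ i ∈ 𝒞, F i ⊆ X) →
    ∑ j ∈ Finset.range K, rk M {e ∈ X | j + 1 ≤ cover 𝒞 F e} ≤ ∑ i ∈ 𝒞, rk M (F i) := by
  intro μ
  induction μ using Nat.strong_induction_on with
  | _ μ IH =>
    intro 𝒞 F K hμ hFX
    by_cases hnest : ∀ i ∈ 𝒞, ∀ j ∈ 𝒞, F i ⊆ F j ∨ F j ⊆ F i
    · exact uncross_nested M hX 𝒞.card 𝒞 F K rfl hnest hFX
    · push_neg at hnest
      obtain ⟨a, ha, b, hb, hab1, hab2⟩ := hnest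
      have hne : a ≠ b := fun h => hab1 (h ▸ Subset.rfl)
      set F' : ℕ → Set α := Function.update (Function.update F a (F a ∪ F b)) b (F a ∩ F b)
        with hF'
      have hF'a : F' a = F a ∪ F b := by
        rw [hF', Function.update_of_ne hne, Function.update_self]
      have hF'b : F' b = F a ∩ F b := by rw [hF', Function.update_self]
      have hF'other : ∀ i, i ≠ a → i ≠ b → F' i = F i := by
        intro i hia hib
        rw [hF', Function.update_of_ne hib, Function.update_of_ne hia]
      -- coverage is preserved
      have hsplit : ∀ (g : ℕ → ℕ∞), ∑ i ∈ 𝒞, g i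
          = g a + g b + ∑ i ∈ (𝒞.erase a).erase b, g i := by
        intro g
        rw [← Finset.add_sum_erase _ g ha, ← Finset.add_sum_erase _ g
          (Finset.mem_erase.2 ⟨Ne.symm hne, hb⟩), add_assoc]
      have hsplitN : ∀ (g : ℕ → ℕ), ∑ i ∈ 𝒞, g i
          = g a + g b + ∑ i ∈ (𝒞.erase a).erase b, g i := by
        intro g
        rw [← Finset.add_sum_erase _ g ha, ← Finset.add_sum_erase _ g
          (Finset.mem_erase.2 ⟨Ne.symm hne, hb⟩), add_assoc]
      have hother : ∀ i ∈ (𝒞.erase a).erase b, F' i = F i := fun i hi =>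
        hF'other i (Finset.ne_of_mem_erase (Finset.mem_of_mem_erase hi))
          (Finset.ne_of_mem_erase hi)
      have hcov : ∀ e, cover 𝒞 F' e = cover 𝒞 F e := by
        classical
        intro e
        rw [cover, cover, Finset.card_filter, Finset.card_filter, hsplitN, hsplitN]
        have h3 : ∑ i ∈ (𝒞.erase a).erase b, (if e ∈ F' i then 1 else 0)
            = ∑ i ∈ (𝒞.erase a).erase b, (if e ∈ F i then 1 else 0) :=
          Finset.sum_congr rfl fun i hi => by rw [hother i hi]
        rw [h3, hF'a, hF'b]
        by_cases hea : e ∈ F a <;> by_cases heb : e ∈ F b <;>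
          simp [hea, heb, Set.mem_union, Set.mem_inter_iff]
      -- rank sum does not increase
      have hrk : ∑ i ∈ 𝒞, rk M (F' i) ≤ ∑ i ∈ 𝒞, rk M (F i) := by
        rw [hsplit (fun i => rk M (F' i)), hsplit (fun i => rk M (F i))]
        have h3 : ∑ i ∈ (𝒞.erase a).erase b, rk M (F' i)
            = ∑ i ∈ (𝒞.erase a).erase b, rk M (F i) :=
          Finset.sum_congr rfl fun i hi => by rw [hother i hi]
        rw [h3, hF'a, hF'b]
        gcongr ?_ + _
        exact rk_submod M (F a) (F b)
      -- measure strictly decreases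
      have hmeas : (∑ i ∈ 𝒞, (X.ncard ^ 2 - (F' i).ncard ^ 2)) < μ := by
        rw [← hμ, hsplitN (fun i => X.ncard ^ 2 - (F' i).ncard ^ 2),
          hsplitN (fun i => X.ncard ^ 2 - (F i).ncard ^ 2)]
        have h3 : ∑ i ∈ (𝒞.erase a).erase b, (X.ncard ^ 2 - (F' i).ncard ^ 2)
            = ∑ i ∈ (𝒞.erase a).erase b, (X.ncard ^ 2 - (F i).ncard ^ 2) :=
          Finset.sum_congr rfl fun i hi => by rw [hother i hi]
        rw [h3, hF'a, hF'b]
        have hfa : (F a).Finite := hX.subset (hFX a ha)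
        have hfb : (F b).Finite := hX.subset (hFX b hb)
        set u := (F a ∪ F b).ncard with hu
        set v := (F a ∩ F b).ncard with hv
        set p := (F a).ncard with hp
        set q := (F b).ncard with hq
        have huv : u + v = p + q := Set.ncard_union_add_ncard_inter _ _ hfa hfb
        have hpu : p < u := by
          refine Set.ncard_lt_ncard ?_ (hfa.union hfb)
          obtain ⟨z, hzb, hza⟩ := not_subset.mp hab2
          exact ssubset_iff_subset_not_subset.mpr
            ⟨subset_union_left, fun h => hza (h (Or.inr hzb))⟩
        have hvp : v < p := by
          refine Set.ncard_lt_ncard ?_ hfa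
          obtain ⟨z, hza, hzb⟩ := not_subset.mp hab1
          exact ssubset_iff_subset_not_subset.mpr
            ⟨inter_subset_left, fun h => hzb (h hza).2⟩
        have hkey : p ^ 2 + q ^ 2 < u ^ 2 + v ^ 2 := by nlinarith
        have hub : u ≤ X.ncard := Set.ncard_le_ncard
          (union_subset (hFX a ha) (hFX b hb)) hX
        have hvb : v ≤ X.ncard := le_trans (by omega) hub
        have hpb : p ≤ X.ncard := Set.ncard_le_ncard (hFX a ha) hX
        have hqb : q ≤ X.ncard := Set.ncard_le_ncard (hFX b hb) hX
        have hub2 : u ^ 2 ≤ X.ncard ^ 2 := Nat.pow_le_pow_left hub 2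
        have hvb2 : v ^ 2 ≤ X.ncard ^ 2 := Nat.pow_le_pow_left hvb 2
        have hpb2 : p ^ 2 ≤ X.ncard ^ 2 := Nat.pow_le_pow_left hpb 2
        have hqb2 : q ^ 2 ≤ X.ncard ^ 2 := Nat.pow_le_pow_left hqb 2
        have hrest : ∑ i ∈ (𝒞.erase a).erase b, (X.ncard ^ 2 - (F i).ncard ^ 2)
            = ∑ i ∈ (𝒞.erase a).erase b, (X.ncard ^ 2 - (F i).ncard ^ 2) := rfl
        omega
      have hF'X : ∀ i ∈ 𝒞, F' i ⊆ X := by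
        intro i hi
        by_cases hia : i = a
        · rw [hia, hF'a]; exact union_subset (hFX a ha) (hFX b hb)
        by_cases hib : i = b
        · rw [hib, hF'b]; exact inter_subset_left.trans (hFX a ha)
        · rw [hF'other i hia hib]; exact hFX i hi
      calc ∑ j ∈ Finset.range K, rk M {e ∈ X | j + 1 ≤ cover 𝒞 F e}
          = ∑ j ∈ Finset.range K, rk M {e ∈ X | j + 1 ≤ cover 𝒞 F' e} := by
            refine Finset.sum_congr rfl fun j _ => ?_
            congr 1
            ext e
            simp [hcov e]
        _ ≤ ∑ i ∈ 𝒞, rk M (F' i) := IH _ hmeas 𝒞 F' K rfl hF'X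
        _ ≤ ∑ i ∈ 𝒞, rk M (F i) := hrk


/-- The colour class of `i` in the partial colouring `c` with domain `D`. -/
def Cls (D : Set α) (c : α → ℕ) (i : ℕ) : Set α := {e ∈ D | c e = i}

/-- An exchange move in the augmentation digraph. -/
def Edge (M : Matroid α) (Λ : α → Finset ℕ) (D : Set α) (c : α → ℕ)
    (x : α) (j : ℕ) (y : α) : Prop :=
  j ∈ Λ x ∧ x ∉ Cls D c j ∧ x ∈ M.closure (Cls D c j) ∧ y ∈ fund M x (Cls D c j)

/-- A path in the augmentation digraph starting at `v`. -/
def IsPath (M : Matroid α) (Λ : α → Finset ℕ) (D : Set α) (c : α → ℕ) (v : α)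
    (p : ℕ → α) (q : ℕ → ℕ) (n : ℕ) : Prop :=
  p 0 = v ∧ ∀ s, s < n → Edge M Λ D c (p s) (q (s + 1)) (p (s + 1))

lemma splice {Λ : α → Finset ℕ} {D : Set α} {c : α → ℕ} {v : α} {p : ℕ → α} {q : ℕ → ℕ}
    {n t d : ℕ} (hpath : IsPath M Λ D c v p q n) (ht : 1 ≤ t) (htd : t + d ≤ n) (hd : 0 < d)
    (hedge : Edge M Λ D c (p (t - 1)) (q (t + d)) (p (t + d))) :
    ∃ p' q', IsPath M Λ D c v p' q' (n - d) ∧ p' (n - d) = p n := by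
  refine ⟨fun s => if s < t then p s else p (s + d),
          fun s => if s < t then q s else q (s + d), ⟨?_, ?_⟩, ?_⟩
  · simp only [if_pos (by omega : 0 < t)]
    exact hpath.1
  · intro s hs
    by_cases h1 : s + 1 < t
    · simp only [if_pos (by omega : s < t), if_pos h1]
      exact hpath.2 s (by omega)
    by_cases h2 : s + 1 = t
    · simp only [if_pos (by omega : s < t), if_neg (by omega : ¬ s + 1 < t)]
      have : s = t - 1 := by omega
      subst this
      have : t - 1 + 1 + d = t + d := by omega
      rw [this]
      exact hedge
    · simp only [if_neg (by omega : ¬ s < t), if_neg (by omega : ¬ s + 1 < t)]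
      have : s + 1 + d = s + d + 1 := by omega
      rw [this]
      exact hpath.2 (s + d) (by omega)
  · simp only [if_neg (by omega : ¬ n - d < t)]
    congr 1
    omega

/-- Key augmentation lemma: either the partial proper colouring can be extended to `v`,
or there is a "deficient" reachable set `R` certifying failure. -/
lemma augment_or_cert {Λ : α → Finset ℕ} {D : Set α} {c : α → ℕ} {v : α}
    (hD : D ⊆ M.E) (hcol : ∀ e ∈ D, c e ∈ Λ e)
    (hind : ∀ i, M.Indep (Cls D c i)) (hv : v ∈ M.E) (hvD : v ∉ D) :
    (∃ c' : α → ℕ, (∀ e ∈ insert v D, c' e ∈ Λ e) ∧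
        ∀ i, M.Indep {e ∈ insert v D | c' e = i}) ∨
    (∃ R : Set α, v ∈ R ∧ R ⊆ insert v D ∧
        ∀ i, {e ∈ R | i ∈ Λ e} ⊆ M.closure (Cls D c i ∩ R)) := by
  classical
  have hClsE : ∀ i, Cls D c i ⊆ M.E := fun i => (sep_subset _ _).trans hD
  set S : Set ℕ :=
    {n | ∃ p q, IsPath M Λ D c v p q n ∧ ∃ i ∈ Λ (p n), p n ∉ M.closure (Cls D c i)} with hS
  by_cases hA : S.Nonempty
  · -- a path with an exit exists; use the shortest one to recolour.
    left
    set n := sInf S with hn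
    obtain ⟨p, q, hpath, i', hi'Λ, hi'cl⟩ : n ∈ S := Nat.sInf_mem hA
    have hmin : ∀ m, m < n → m ∉ S := fun m hm hmS => (Nat.sInf_le hmS).not_gt hm
    have hp0 : p 0 = v := hpath.1
    have hpmem : ∀ s, 1 ≤ s → s ≤ n → p s ∈ Cls D c (q s) := by
      intro s h1 h2
      obtain ⟨-, -, hcl, hfund⟩ := hpath.2 (s - 1) (by omega)
      have hs : s - 1 + 1 = s := by omega
      rw [hs] at hcl hfund
      exact fund_subset hcl hfund
    have hpD : ∀ s, 1 ≤ s → s ≤ n → p s ∈ D := fun s h1 h2 => (hpmem s h1 h2).1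
    have hpins : ∀ s, s ≤ n → p s ∈ insert v D := by
      intro s hs
      rcases Nat.eq_zero_or_pos s with h | h
      · rw [h, hp0]; exact mem_insert _ _
      · exact mem_insert_of_mem _ (hpD s h hs)
    -- no intermediate vertex has an exit
    have hnoexit : ∀ s, s < n → ∀ i ∈ Λ (p s), p s ∈ M.closure (Cls D c i) := by
      intro s hs i hiΛ
      by_contra hno
      exact hmin s hs ⟨p, q, ⟨hp0, fun u hu => hpath.2 u (by omega)⟩, i, hiΛ, hno⟩
    -- injectivity of the path
    have hinj : ∀ a b, a ≤ n → b ≤ n → p a = p b → a = b := by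
      intro a b han hbn hab
      by_contra hne
      -- wlog a < b
      wlog hlt : a < b generalizing a b
      · exact this b a hbn han hab.symm (Ne.symm hne) (by omega)
      rcases eq_or_lt_of_le hbn with rfl | hbn'
      · -- b = n : then p a has an exit, contradicting hnoexit
        exact (hnoexit a (by omega) i' (hab ▸ hi'Λ)) |> fun h => hi'cl (hab ▸ h)
      · -- b < n : splice out the cycle
        have hedge := hpath.2 b (by omega)
        have hedge' : Edge M Λ D c (p ((a + 1) - 1)) (q ((a + 1) + (b - a)))
            (p ((a + 1) + (b - a))) := by
          have e1 : (a + 1) - 1 = a := by omega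
          have e2 : (a + 1) + (b - a) = b + 1 := by omega
          rw [e1, e2, hab]
          exact hedge
        obtain ⟨p', q', hpath', hend⟩ := splice hpath (by omega) (by omega) (by omega) hedge'
        refine hmin (n - (b - a)) (by omega) ⟨p', q', hpath', i', ?_, ?_⟩
        · rw [hend]; exact hi'Λ
        · rw [hend]; exact hi'cl
    -- no shortcuts
    have hnoshort : ∀ t u, 1 ≤ t → t < u → u ≤ n → q u = q t →
        p u ∉ fund M (p (t - 1)) (Cls D c (q t)) := by
      intro t u h1 h2 h3 hqq hmem
      obtain ⟨hq1, hq2, hq3, -⟩ := hpath.2 (t - 1) (by omega)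
      have hs : t - 1 + 1 = t := by omega
      rw [hs] at hq1 hq2 hq3
      have hedge' : Edge M Λ D c (p (t - 1)) (q (t + (u - t))) (p (t + (u - t))) := by
        have e2 : t + (u - t) = u := by omega
        rw [e2, hqq]
        exact ⟨hq1, hq2, hq3, hmem⟩
      obtain ⟨p', q', hpath', hend⟩ := splice hpath (by omega) (by omega) (by omega) hedge'
      refine hmin (n - (u - t)) (by omega) ⟨p', q', hpath', i', ?_, ?_⟩
      · rw [hend]; exact hi'Λ
      · rw [hend]; exact hi'cl
    -- define the new colouring
    set nextC : ℕ → ℕ := fun s => if s = n then i' else q (s + 1) with hnextC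
    set c' : α → ℕ := fun e => if h : ∃ s, s ≤ n ∧ p s = e then nextC h.choose else c e with hc'
    have hc'p : ∀ s, s ≤ n → c' (p s) = nextC s := by
      intro s hs
      have h : ∃ u, u ≤ n ∧ p u = p s := ⟨s, hs, rfl⟩
      rw [hc']
      simp only [dif_pos h]
      congr 1
      exact hinj h.choose s h.choose_spec.1 hs h.choose_spec.2
    have hc'off : ∀ e, (¬ ∃ s, s ≤ n ∧ p s = e) → c' e = c e := by
      intro e he
      rw [hc']
      simp only [dif_neg he]
    refine ⟨c', ?_, ?_⟩
    · intro e he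
      by_cases h : ∃ s, s ≤ n ∧ p s = e
      · obtain ⟨s, hs, rfl⟩ := h
        rw [hc'p s hs, hnextC]
        rcases eq_or_lt_of_le hs with rfl | hsn
        · simpa using hi'Λ
        · simp only [if_neg (by omega : ¬ s = n)]
          exact (hpath.2 s hsn).1
      · rw [hc'off e h]
        rcases he with rfl | heD
        · exact absurd ⟨0, by omega, hp0⟩ h
        · exact hcol e heD
    · -- independence of the new colour classes
      intro j
      set T : Finset ℕ := (Finset.Icc 1 n).filter (fun t => q t = j) with hT
      have hTmem : ∀ t, t ∈ T ↔ (1 ≤ t ∧ t ≤ n ∧ q t = j) := by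
        intro t; simp [hT, Finset.mem_filter, Finset.mem_Icc]; tauto
      set xf : ℕ → α := fun t => p (t - 1) with hxf
      set yf : ℕ → α := fun t => p t with hyf
      have hedgeT : ∀ t ∈ T, xf t ∉ Cls D c j ∧ xf t ∈ M.closure (Cls D c j) ∧
          yf t ∈ fund M (xf t) (Cls D c j) := by
        intro t htT
        obtain ⟨h1, h2, h3⟩ := (hTmem t).1 htT
        obtain ⟨he1, he2, he3, he4⟩ := hpath.2 (t - 1) (by omega)
        have hs : t - 1 + 1 = t := by omega
        rw [hs] at he1 he2 he3 he4
        rw [← h3]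
        exact ⟨he2, he3, he4⟩
      have hbase : M.Indep ((Cls D c j \ (yf '' T)) ∪ xf '' T) := by
        refine krogdahl T.card (Cls D c j) T xf yf rfl (hind j) hedgeT ?_ ?_ ?_
        · intro s hs t ht hst
          replace hs := (hTmem s).1 (Finset.mem_coe.mp hs)
          replace ht := (hTmem t).1 (Finset.mem_coe.mp ht)
          have := hinj (s - 1) (t - 1) (by omega) (by omega) hst
          omega
        · intro s hs t ht hst
          replace hs := (hTmem s).1 (Finset.mem_coe.mp hs)
          replace ht := (hTmem t).1 (Finset.mem_coe.mp ht)
          have := hinj s t (by omega) (by omega) hst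
          omega
        · intro s hs t ht hst
          replace hs := (hTmem s).1 (Finset.mem_coe.mp hs)
          replace ht := (hTmem t).1 (Finset.mem_coe.mp ht)
          have h5 : q t = q s := by rw [hs.2.2, ht.2.2]
          have := hnoshort s t hs.1 hst ht.2.1 h5
          rwa [hs.2.2] at this
      have hbasecl : ((Cls D c j \ (yf '' T)) ∪ xf '' T) ⊆ M.closure (Cls D c j) := by
        rintro e (⟨he, -⟩ | ⟨t, ht, rfl⟩)
        · exact M.mem_closure_of_mem he (hClsE j)
        · exact (hedgeT t ht).2.1
      -- the new colour class equals the expected set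
      have hclseq : {e ∈ insert v D | c' e = j} =
          if j = i' then insert (p n) ((Cls D c j \ (yf '' T)) ∪ xf '' T)
          else ((Cls D c j \ (yf '' T)) ∪ xf '' T) := by
        ext e
        simp only [Set.mem_setOf_eq]
        constructor
        · rintro ⟨hins, hcj⟩
          by_cases h : ∃ s, s ≤ n ∧ p s = e
          · obtain ⟨s, hs, rfl⟩ := h
            rw [hc'p s hs, hnextC] at hcj
            rcases eq_or_lt_of_le hs with rfl | hsn
            · have hcj' : i' = j := by simpa using hcj
              rw [if_pos hcj'.symm]
              exact mem_insert _ _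
            · simp only [if_neg (by omega : ¬ s = n)] at hcj
              have : p s ∈ xf '' T := by
                refine ⟨s + 1, ?_, by simp [hxf]⟩
                rw [Finset.mem_coe, hTmem]
                omega
              split_ifs
              · exact mem_insert_of_mem _ (Or.inr this)
              · exact Or.inr this
          · rw [hc'off e h] at hcj
            have heD : e ∈ D := by
              rcases hins with rfl | h' 
              · exact absurd ⟨0, by omega, hp0⟩ h
              · exact h'
            have : e ∈ Cls D c j \ (yf '' T) := by
              refine ⟨⟨heD, hcj⟩, ?_⟩
              rintro ⟨t, ht, rfl⟩
              rw [Finset.mem_coe, hTmem] at ht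
              exact h ⟨t, by omega, rfl⟩
            split_ifs
            · exact mem_insert_of_mem _ (Or.inl this)
            · exact Or.inl this
        · intro hmem
          have hcore : e ∈ ((Cls D c j \ (yf '' T)) ∪ xf '' T) ∨ (j = i' ∧ e = p n) := by
            split_ifs at hmem with hji
            · rcases hmem with rfl | hmem
              · exact Or.inr ⟨hji, rfl⟩
              · exact Or.inl hmem
            · exact Or.inl hmem
          rcases hcore with (⟨⟨heD, hce⟩, hey⟩ | ⟨t, ht, rfl⟩) | ⟨hji, rfl⟩
          · refine ⟨mem_insert_of_mem _ heD, ?_⟩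
            by_cases h : ∃ s, s ≤ n ∧ p s = e
            · obtain ⟨s, hs, rfl⟩ := h
              have hs1 : 1 ≤ s := by
                rcases Nat.eq_zero_or_pos s with rfl | h'
                · exact absurd (hp0 ▸ heD) hvD
                · omega
              have hqs : q s = j := ((hpmem s hs1 hs).2).symm.trans hce
              exact absurd ⟨s, Finset.mem_coe.mpr ((hTmem s).2 ⟨hs1, hs, hqs⟩), rfl⟩ hey
            · rw [hc'off _ h]; exact hce
          · replace ht := (hTmem t).1 (Finset.mem_coe.mp ht)
            refine ⟨hpins (t - 1) (by omega), ?_⟩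
            show c' (p (t - 1)) = j
            rw [hc'p (t - 1) (by omega), hnextC]
            simp only []
            have h6 : t - 1 + 1 = t := by omega
            rw [if_neg (show ¬ t - 1 = n by omega), h6]
            exact ht.2.2
          · refine ⟨hpins n le_rfl, ?_⟩
            rw [hc'p n le_rfl]
            simp [hnextC, hji]
      rw [hclseq]
      split_ifs with hji
      · -- add p n to the class
        have hpn : p n ∉ M.closure ((Cls D c j \ (yf '' T)) ∪ xf '' T) := by
          intro hmem
          refine hi'cl ?_
          rw [← hji]
          exact (M.closure_subset_closure_of_subset_closure hbasecl) hmem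
        have hpnE : p n ∈ M.E := (hpins n le_rfl).elim (fun h => h ▸ hv) (fun h => hD h)
        rw [hbase.insert_indep_iff]
        exact Or.inl ⟨hpnE, hpn⟩
      · exact hbase
  · -- no augmenting path: build the certificate
    right
    set R : Set α := {x | ∃ n p q, IsPath M Λ D c v p q n ∧ p n = x} with hR
    have hvR : v ∈ R := ⟨0, fun _ => v, fun _ => 0, ⟨rfl, fun s hs => absurd hs (by omega)⟩, rfl⟩
    have hRins : R ⊆ insert v D := by
      rintro x ⟨m, p, q, hpath, rfl⟩
      rcases Nat.eq_zero_or_pos m with rfl | hm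
      · rw [hpath.1]; exact mem_insert _ _
      · obtain ⟨-, -, hcl, hfund⟩ := hpath.2 (m - 1) (by omega)
        have hs : m - 1 + 1 = m := by omega
        rw [hs] at hcl hfund
        exact mem_insert_of_mem _ (fund_subset hcl hfund).1
    refine ⟨R, hvR, hRins, ?_⟩
    intro i
    rintro x ⟨hxR, hxΛ⟩
    obtain ⟨m, p, q, hpath, rfl⟩ := hxR
    by_cases hxC : p m ∈ Cls D c i
    · exact M.mem_closure_of_mem ⟨hxC, ⟨m, p, q, hpath, rfl⟩⟩
        (fun y hy => hClsE i hy.1)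
    · have hxcl : p m ∈ M.closure (Cls D c i) := by
        by_contra hno
        exact hA ⟨m, p, q, hpath, i, hxΛ, hno⟩
      have hfsub : fund M (p m) (Cls D c i) ⊆ Cls D c i ∩ R := by
        intro y hy
        refine ⟨fund_subset hxcl hy, ?_⟩
        refine ⟨m + 1, fun s => if s ≤ m then p s else y, fun s => if s ≤ m then q s else i,
          ⟨?_, ?_⟩, ?_⟩
        · simp only [if_pos (by omega : 0 ≤ m)]; exact hpath.1
        · intro s hs
          rcases Nat.lt_or_ge s m with h | h
          · simp only [if_pos (by omega : s ≤ m), if_pos (by omega : s + 1 ≤ m)]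
            exact hpath.2 s h
          · have hsm : s = m := by omega
            subst hsm
            simp only [if_pos le_rfl, if_neg (by omega : ¬ s + 1 ≤ s)]
            exact ⟨hxΛ, hxC, hxcl, hy⟩
        · simp only [if_neg (by omega : ¬ m + 1 ≤ m)]
      exact M.closure_subset_closure hfsub (mem_closure_fund (hind i) hxcl)


lemma encard_biUnion_of_disjoint {s : Finset ℕ} {f : ℕ → Set α}
    (h : ∀ i ∈ s, ∀ j ∈ s, i ≠ j → Disjoint (f i) (f j)) :
    (⋃ i ∈ s, f i).encard = ∑ i ∈ s, (f i).encard := by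
  classical
  induction s using Finset.induction with
  | empty => simp
  | @insert a s ha IH =>
    rw [Finset.set_biUnion_insert, Finset.sum_insert ha, Set.encard_union_eq, IH]
    · intro i hi j hj hij
      exact h i (Finset.mem_insert_of_mem hi) j (Finset.mem_insert_of_mem hj) hij
    · refine Set.disjoint_iUnion₂_right.mpr fun i hi => ?_
      exact h a (Finset.mem_insert_self a s) i (Finset.mem_insert_of_mem hi)
        (fun hh => ha (hh ▸ hi))
    

theorem main {α : Type*} (M : Matroid α)
    (hfin : M.E.Finite) (ℓ : α → ℕ)
    (hcol : ∃ c : α → ℕ, (∀ e ∈ M.E, c e ∈ Finset.Icc 1 (ℓ e)) ∧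
      ∀ i : ℕ, M.Indep {e ∈ M.E | c e = i})
    (L : α → Finset ℕ) (hL : ∀ e ∈ M.E, (L e).card = ℓ e) :
    ∃ c : α → ℕ, (∀ e ∈ M.E, c e ∈ L e) ∧
      ∀ i : ℕ, M.Indep {e ∈ M.E | c e = i} := by
  classical
  obtain ⟨c₀, hc₀mem, hc₀ind⟩ := hcol
  set 𝒞 : Finset ℕ := hfin.toFinset.biUnion L with h𝒞
  have hL𝒞 : ∀ e ∈ M.E, L e ⊆ 𝒞 := by
    intro e he i hi
    rw [h𝒞, Finset.mem_biUnion]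
    exact ⟨e, hfin.mem_toFinset.mpr he, hi⟩
  -- main induction : every subset of the ground set admits a proper colouring from L
  have key : ∀ (k : ℕ) (D : Set α), D ⊆ M.E → D.ncard = k →
      ∃ c' : α → ℕ, (∀ e ∈ D, c' e ∈ L e) ∧ ∀ i, M.Indep {e ∈ D | c' e = i} := by
    intro k
    induction k with
    | zero =>
      intro D hD hcard
      have hDempty : D = ∅ := by
        have : D.Finite := hfin.subset hD
        rwa [Set.ncard_eq_zero this] at hcard
      subst hDempty
      exact ⟨fun _ => 0, by simp, fun i => by
        simpa using M.empty_indep⟩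
    | succ k IH =>
      intro D hD hcard
      have hDfin : D.Finite := hfin.subset hD
      have hDne : D.Nonempty := Set.nonempty_of_ncard_ne_zero (by omega)
      obtain ⟨v, hv⟩ := hDne
      set D' : Set α := D \ {v} with hD'
      have hD'card : D'.ncard = k := by
        rw [hD', Set.ncard_diff_singleton_of_mem hv, hcard]; omega
      obtain ⟨c', hc'mem, hc'ind⟩ := IH D' (diff_subset.trans hD) hD'card
      have hins : insert v D' = D := by
        rw [hD', Set.insert_diff_singleton, Set.insert_eq_self.mpr hv]
      rcases augment_or_cert (Λ := L) (diff_subset.trans hD) hc'mem hc'ind (hD hv)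
          (by simp [hD']) with ⟨c'', h1, h2⟩ | ⟨R, hvR, hRins, hcert⟩
      · rw [hins] at h1 h2
        exact ⟨c'', h1, h2⟩
      · -- derive a contradiction by counting
        exfalso
        have hRE : R ⊆ M.E := hRins.trans (by rw [hins]; exact hD)
        have hRfin : R.Finite := hfin.subset hRE
        set F : ℕ → Set α := fun i => {e ∈ R | i ∈ L e} with hF
        have hFR : ∀ i, F i ⊆ R := fun i => sep_subset _ _
        have hcover : ∀ e ∈ R, cover 𝒞 F e = ℓ e := by
          intro e he
          rw [cover]
          have hfeq : (@Finset.filter ℕ (fun i => e ∈ F i) (Classical.decPred _) 𝒞) = L e := by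
            ext i
            simp only [Finset.mem_filter, hF, Set.mem_setOf_eq]
            constructor
            · rintro ⟨-, -, h⟩; exact h
            · intro hi; exact ⟨hL𝒞 e (hRE he) hi, he, hi⟩
          rw [hfeq]
          exact hL e (hRE he)
        set K : ℕ := 𝒞.card with hK
        have hℓK : ∀ e ∈ R, ℓ e ≤ K := by
          intro e he
          rw [← hL e (hRE he), hK]
          exact Finset.card_le_card (hL𝒞 e (hRE he))
        -- (1) |R| = ∑_j |C_{j+1} ∩ R|
        have h1 : R.encard = ∑ j ∈ Finset.range K,
            ({e ∈ M.E | c₀ e = j + 1} ∩ R).encard := by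
          rw [← encard_biUnion_of_disjoint]
          · congr 1
            ext e
            simp only [Set.mem_iUnion, Finset.mem_range, Set.mem_inter_iff,
              Set.mem_setOf_eq]
            constructor
            · intro he
              have h := hc₀mem e (hRE he)
              rw [Finset.mem_Icc] at h
              have hle := hℓK e he
              exact ⟨c₀ e - 1, by omega, ⟨hRE he, by omega⟩, he⟩
            · rintro ⟨j, -, -, he⟩; exact he
          · intro i hi j hj hij
            rw [Set.disjoint_iff]
            rintro e ⟨⟨⟨-, h1⟩, -⟩, ⟨⟨-, h2⟩, -⟩⟩
            omega
        -- (2) |C_{j+1} ∩ R| ≤ rk N_j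
        have h2 : ∀ j ∈ Finset.range K, ({e ∈ M.E | c₀ e = j + 1} ∩ R).encard
            ≤ rk M {e ∈ R | j + 1 ≤ cover 𝒞 F e} := by
          intro j hj
          refine encard_le_rk ((hc₀ind (j + 1)).subset inter_subset_left) ?_
          rintro e ⟨⟨heE, hc⟩, heR⟩
          refine ⟨heR, ?_⟩
          rw [hcover e heR]
          have h := hc₀mem e heE
          rw [Finset.mem_Icc] at h
          omega
        -- (4) rk (F i) = |Cls D' c' i ∩ R|
        have h4 : ∀ i ∈ 𝒞, rk M (F i) = (Cls D' c' i ∩ R).encard := by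
          intro i _
          refine rk_eq_of_spanning ((hc'ind i).subset inter_subset_left) ?_ (hcert i)
          rintro e ⟨⟨heD', hce⟩, heR⟩
          exact ⟨heR, hce ▸ hc'mem e heD'⟩
        -- (5) ∑_i |Cls D' c' i ∩ R| = |R \ {v}|
        have h5 : ∑ i ∈ 𝒞, (Cls D' c' i ∩ R).encard = (R \ {v}).encard := by
          rw [← encard_biUnion_of_disjoint]
          · congr 1
            ext e
            simp only [Set.mem_iUnion, Set.mem_inter_iff, Set.mem_diff,
              Set.mem_singleton_iff]
            constructor
            · rintro ⟨i, hi, ⟨heD', -⟩, heR⟩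
              refine ⟨heR, ?_⟩
              intro hev
              exact (by simp [hD'] : v ∉ D') (hev ▸ heD')
            · rintro ⟨heR, hne⟩
              have heD' : e ∈ D' := by
                rcases Set.mem_insert_iff.mp (hRins heR) with h | h
                · exact absurd h hne
                · exact h
              exact ⟨c' e, hL𝒞 e (hRE heR) (hc'mem e heD'), ⟨heD', rfl⟩, heR⟩
          · intro i hi j hj hij
            rw [Set.disjoint_iff]
            rintro e ⟨⟨⟨-, h1⟩, -⟩, ⟨⟨-, h2⟩, -⟩⟩
            exact hij (h1 ▸ h2 ▸ rfl)
        -- chain the inequalities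
        have hchain : R.encard ≤ (R \ {v}).encard := by
          calc R.encard = ∑ j ∈ Finset.range K, ({e ∈ M.E | c₀ e = j + 1} ∩ R).encard := h1
            _ ≤ ∑ j ∈ Finset.range K, rk M {e ∈ R | j + 1 ≤ cover 𝒞 F e} :=
                Finset.sum_le_sum h2
            _ ≤ ∑ i ∈ 𝒞, rk M (F i) := uncross M hRfin _ 𝒞 F K rfl (fun i _ => hFR i)
            _ = ∑ i ∈ 𝒞, (Cls D' c' i ∩ R).encard := Finset.sum_congr rfl h4
            _ = (R \ {v}).encard := h5
        have hlt : (R \ {v}).encard < R.encard := by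
          rw [← Set.encard_diff_singleton_add_one hvR]
          have hne : (R \ {v}).encard ≠ ⊤ := by
            rw [Set.encard_ne_top_iff]
            exact hRfin.diff
          exact ENat.lt_add_one_iff hne |>.mpr le_rfl
        exact absurd hchain hlt.not_ge
  obtain ⟨c', h1, h2⟩ := key M.E.ncard M.E Subset.rfl rfl
  exact ⟨c', h1, h2⟩


end ListColorAux

/-- If a matroid is colorable from the lists `L_ℓ(e) = {1, ..., ℓ(e)}`, then it is
colorable from every list assignment `L` with `|L(e)| = ℓ(e)` for all `e`. -/
theorem list_coloring_of_initial_segment_coloring {α : Type*} (M : Matroid α)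
    (hfin : M.E.Finite) (ℓ : α → ℕ)
    (hcol : ∃ c : α → ℕ, (∀ e ∈ M.E, c e ∈ Finset.Icc 1 (ℓ e)) ∧
      ∀ i : ℕ, M.Indep {e ∈ M.E | c e = i})
    (L : α → Finset ℕ) (hL : ∀ e ∈ M.E, (L e).card = ℓ e) :
    ∃ c : α → ℕ, (∀ e ∈ M.E, c e ∈ L e) ∧
      ∀ i : ℕ, M.Indep {e ∈ M.E | c e = i} :=
  ListColorAux.main M hfin ℓ hcol L hL
end

section
/- Let M be a matroid whose ground set E is partitioned into independent sets I_1, ..., I_k. Define ℓ(e) = i for e ∈ I_i. Then M is colorable from every list assignment L with |L(e)| = ℓ(e) for all e ∈ E. -/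
section FR
open Finset
variable {α : Type*} {M : Matroid α}

/-- Rank of (the coercion of) a finset in a matroid, via a choice of `Basis'`. -/
noncomputable def frk (M : Matroid α) (X : Finset α) : ℕ :=
  (M.exists_isBasis' ↑X).choose.ncard

lemma frk_spec (M : Matroid α) (X : Finset α) :
    M.IsBasis' (M.exists_isBasis' (↑X : Set α)).choose ↑X :=
  (M.exists_isBasis' ↑X).choose_spec

lemma Basis'_finite {J : Set α} {X : Finset α} (hJ : M.IsBasis' J ↑X) : J.Finite :=
  X.finite_toSet.subset hJ.subset

lemma frk_eq {J : Set α} {X : Finset α} (hJ : M.IsBasis' J ↑X) : frk M X = J.ncard := by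
  have h2 := frk_spec M X
  have := h2.encard_eq_encard hJ
  rw [frk, Set.ncard_def, Set.ncard_def, this]

lemma ncard_le_frk {I : Set α} {X : Finset α} (hI : M.Indep I) (hIX : I ⊆ ↑X) :
    I.ncard ≤ frk M X := by
  obtain ⟨J, hJ, hIJ⟩ := hI.subset_isBasis'_of_subset hIX
  rw [frk_eq hJ]
  exact Set.ncard_le_ncard hIJ (Basis'_finite hJ)

lemma frk_empty (M : Matroid α) : frk M (∅ : Finset α) = 0 := by
  have h := frk_spec M (∅ : Finset α)
  have hsub : (M.exists_isBasis' (↑(∅ : Finset α) : Set α)).choose = ∅ :=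
    Set.subset_empty_iff.mp (Finset.coe_empty ▸ h.subset)
  simp only [frk, hsub, Set.ncard_empty]

lemma frk_mono {X Y : Finset α} (hXY : X ⊆ Y) : frk M X ≤ frk M Y := by
  have h := frk_spec M X
  exact (frk_eq h).le.trans (ncard_le_frk h.indep (h.subset.trans (by exact_mod_cast hXY)))

lemma frk_insert_le (X : Finset α) (v : α) [DecidableEq α] :
    frk M (insert v X) ≤ frk M X + 1 := by
  have h := frk_spec M (insert v X)
  set J := (M.exists_isBasis' (↑(insert v X) : Set α)).choose with hJdef
  rw [frk_eq h]
  have hsub : J \ {v} ⊆ ↑X := by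
    intro e he
    have h1 := h.subset he.1
    simp only [coe_insert, Set.mem_insert_iff] at h1
    rcases h1 with rfl | h1
    · exact absurd rfl he.2
    · exact h1
  have hle : (J \ {v}).ncard ≤ frk M X :=
    ncard_le_frk (h.indep.subset Set.diff_subset) hsub
  have hfin := Basis'_finite h
  have h2 : J ⊆ insert v (J \ {v}) := by
    intro e he
    by_cases hev : e = v
    · exact hev ▸ Set.mem_insert _ _
    · exact Set.mem_insert_of_mem _ ⟨he, hev⟩
  have h3 : J.ncard ≤ (J \ {v}).ncard + 1 :=
    (Set.ncard_le_ncard h2 (((hfin.diff (t := {v})).insert v))).trans (Set.ncard_insert_le _ _)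
  omega

lemma frk_submod (X Y : Finset α) [DecidableEq α] :
    frk M (X ∪ Y) + frk M (X ∩ Y) ≤ frk M X + frk M Y := by
  obtain ⟨Bi, hBi⟩ := M.exists_isBasis' (↑(X ∩ Y) : Set α)
  have hsub1 : Bi ⊆ (↑(X ∪ Y) : Set α) := by
    refine hBi.subset.trans ?_
    intro e he
    simp only [coe_inter, Set.mem_inter_iff] at he
    simp only [coe_union, Set.mem_union]
    exact Or.inl he.1
  obtain ⟨J, hJ, hBiJ⟩ := hBi.indep.subset_isBasis'_of_subset hsub1
  have hJfin : J.Finite := Basis'_finite hJ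
  have h1 : frk M (X ∪ Y) = J.ncard := frk_eq hJ
  have h2 : frk M (X ∩ Y) = Bi.ncard := frk_eq hBi
  have hX : (J ∩ ↑X).ncard ≤ frk M X :=
    ncard_le_frk (hJ.indep.subset Set.inter_subset_left) Set.inter_subset_right
  have hY : (J ∩ ↑Y).ncard ≤ frk M Y :=
    ncard_le_frk (hJ.indep.subset Set.inter_subset_left) Set.inter_subset_right
  have hkey : J.ncard + Bi.ncard ≤ (J ∩ ↑X).ncard + (J ∩ ↑Y).ncard := by
    have hUI : (J ∩ ↑X) ∪ (J ∩ ↑Y) = J := by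
      rw [← Set.inter_union_distrib_left, Set.inter_eq_left]
      intro e he
      have := hJ.subset he
      simpa using this
    have hII : Bi ⊆ (J ∩ ↑X) ∩ (J ∩ ↑Y) := by
      intro e he
      have h3 := hBi.subset he
      simp only [coe_inter, Set.mem_inter_iff] at h3
      exact ⟨⟨hBiJ he, h3.1⟩, hBiJ he, h3.2⟩
    have hsum := Set.ncard_union_add_ncard_inter (J ∩ ↑X) (J ∩ ↑Y)
      (hJfin.subset Set.inter_subset_left) (hJfin.subset Set.inter_subset_left)
    rw [hUI] at hsum
    have := Set.ncard_le_ncard hII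
      (hJfin.subset (Set.inter_subset_left.trans Set.inter_subset_left))
    omega
  omega

lemma indep_of_card_le_frk {X : Finset α} (h : X.card ≤ frk M X) : M.Indep ↑X := by
  have hs := frk_spec M X
  have hJX := hs.subset
  have heq : (↑X : Set α) = (M.exists_isBasis' (↑X : Set α)).choose := by
    refine (Set.eq_of_subset_of_ncard_le hJX ?_ X.finite_toSet).symm
    rw [Set.ncard_coe_finset]
    exact h.trans (frk_eq hs).le
  rw [heq]; exact hs.indep

lemma frk_of_indep {X : Finset α} (h : M.Indep ↑X) : frk M X = X.card := by
  have : M.IsBasis' (↑X : Set α) ↑X := h.isBasis_self.isBasis'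
  rw [frk_eq this, Set.ncard_coe_finset]

end FR

section LemB
open Finset
variable {α : Type*} [DecidableEq α]

/-- Key counting lemma: for a "rank-like" function `f` (normalized, monotone, unit-step,
submodular), if `T` is partitioned into fibers of `lvl` with values in `[1,t]`, and each
element `e` has a list `L e ⊆ C` of size at least `lvl e`, then the sum of ranks of the
color classes `{e ∈ T : c ∈ L e}` is at least the sum of ranks of the fibers. -/
lemma lemB (N : ℕ) : ∀ (f : Finset α → ℕ),
    f ∅ = 0 →
    (∀ X Y : Finset α, X ⊆ Y → f X ≤ f Y) →
    (∀ (X : Finset α) (v : α), f (insert v X) ≤ f X + 1) →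
    (∀ X Y : Finset α, f (X ∪ Y) + f (X ∩ Y) ≤ f X + f Y) →
    ∀ (t : ℕ) (T : Finset α) (lvl : α → ℕ) (L : α → Finset ℕ) (C : Finset ℕ),
    t + T.card ≤ N →
    (∀ e ∈ T, 1 ≤ lvl e) →
    (∀ e ∈ T, lvl e ≤ t) →
    (∀ e ∈ T, lvl e ≤ (L e).card) →
    (∀ e ∈ T, L e ⊆ C) →
    ∑ i ∈ Finset.Icc 1 t, f (T.filter (fun e => lvl e = i)) ≤
      ∑ c ∈ C, f (T.filter (fun e => c ∈ L e)) := by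
  induction N with
  | zero =>
    intro f hf0 hmono hstep hsub t T lvl L C hN h1 h2 h3 h4
    obtain rfl : t = 0 := by omega
    simp
  | succ N ih =>
    intro f hf0 hmono hstep hsub t T lvl L C hN h1 h2 h3 h4
    rcases Nat.eq_zero_or_pos t with rfl | ht
    · simp
    by_cases htop : T.filter (fun e => lvl e = t) = ∅
    · -- top fiber empty: decrease t
      obtain ⟨s, rfl⟩ : ∃ s, t = s + 1 := ⟨t - 1, by omega⟩
      have h2' : ∀ e ∈ T, lvl e ≤ s := by
        intro e he
        have := h2 e he
        have hne := Finset.filter_eq_empty_iff.mp htop he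
        omega
      have := ih f hf0 hmono hstep hsub s T lvl L C (by omega) h1 h2' h3 h4
      rwa [Finset.sum_Icc_succ_top (by omega : 1 ≤ s + 1), htop, hf0, add_zero]
    · obtain ⟨v, hv⟩ := Finset.nonempty_iff_ne_empty.mpr htop
      have hvT : v ∈ T := (Finset.mem_filter.mp hv).1
      have hvlvl : lvl v = t := (Finset.mem_filter.mp hv).2
      have hcard : T.card = (T.erase v).card + 1 := by
        rw [Finset.card_erase_of_mem hvT]
        have := Finset.card_pos.mpr ⟨v, hvT⟩
        omega
      have herase_filter : ∀ (p : α → Prop) [DecidablePred p],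
          (T.erase v).filter p = (T.filter p).erase v := by
        intro p _
        ext e
        simp only [Finset.mem_filter, Finset.mem_erase]
        tauto
      have hfilter_sub : ∀ (p : α → Prop) [DecidablePred p],
          T.filter p ⊆ insert v ((T.erase v).filter p) := by
        intro p _ e he
        rcases eq_or_ne e v with rfl | hne
        · exact Finset.mem_insert_self _ _
        · refine Finset.mem_insert_of_mem ?_
          rw [herase_filter]
          exact Finset.mem_erase.mpr ⟨hne, he⟩
      set Tt := T.filter (fun e => lvl e = t) with hTtdef
      by_cases hb : f Tt = f (Tt.erase v)
      · -- case (a): v is spanned inside its own fiber; drop v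
        have key := ih f hf0 hmono hstep hsub t (T.erase v) lvl L C (by omega)
          (fun e he => h1 e (Finset.mem_of_mem_erase he))
          (fun e he => h2 e (Finset.mem_of_mem_erase he))
          (fun e he => h3 e (Finset.mem_of_mem_erase he))
          (fun e he => h4 e (Finset.mem_of_mem_erase he))
        have hL : ∑ i ∈ Finset.Icc 1 t, f (T.filter (fun e => lvl e = i)) =
            ∑ i ∈ Finset.Icc 1 t, f ((T.erase v).filter (fun e => lvl e = i)) := by
          refine Finset.sum_congr rfl fun i _ => ?_
          rw [herase_filter]
          rcases eq_or_ne i t with rfl | hit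
          · exact hb
          · rw [Finset.erase_eq_of_notMem]
            simp only [Finset.mem_filter, not_and]
            intro _ h
            exact absurd (by rw [← h, hvlvl]) hit.symm
        have hR : ∑ c ∈ C, f ((T.erase v).filter (fun e => c ∈ L e)) ≤
            ∑ c ∈ C, f (T.filter (fun e => c ∈ L e)) :=
          Finset.sum_le_sum fun c _ => hmono _ _
            (Finset.filter_subset_filter _ (Finset.erase_subset _ _))
        rw [hL]
        exact key.trans hR
      · -- case (b): contract v
        have hTt_ins : Tt = insert v (Tt.erase v) := (Finset.insert_erase hv).symm
        have hb1 : f Tt = f (Tt.erase v) + 1 := by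
          have hle : f Tt ≤ f (Tt.erase v) + 1 := by
            conv_lhs => rw [hTt_ins]
            exact hstep _ _
          have hge : f (Tt.erase v) ≤ f Tt := hmono _ _ (Finset.erase_subset _ _)
          omega
        have hfv1 : f {v} = 1 := by
          have hup : f {v} ≤ 1 := by
            have := hstep ∅ v
            simpa [hf0] using this
          have hlo : 1 ≤ f {v} := by
            have hu : (Tt.erase v) ∪ {v} = Tt := by
              rw [Finset.union_comm, ← Finset.insert_eq, ← hTt_ins]
            have hi : (Tt.erase v) ∩ {v} = ∅ := by
              ext e
              simp only [Finset.mem_inter, Finset.mem_erase, Finset.mem_singleton,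
                Finset.notMem_empty, iff_false]
              tauto
            have := hsub (Tt.erase v) {v}
            rw [hu, hi, hf0] at this
            omega
          omega
        set g : Finset α → ℕ := fun X => f (insert v X) - 1 with hgdef
        have hins1 : ∀ X : Finset α, 1 ≤ f (insert v X) := by
          intro X
          calc 1 = f {v} := hfv1.symm
          _ ≤ f (insert v X) := hmono _ _ (Finset.singleton_subset_iff.mpr
            (Finset.mem_insert_self _ _))
        have hg0 : g ∅ = 0 := by
          simp only [hgdef]
          rw [show (insert v (∅ : Finset α)) = {v} from rfl, hfv1]
        have hgmono : ∀ X Y : Finset α, X ⊆ Y → g X ≤ g Y := fun X Y h =>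
          Nat.sub_le_sub_right (hmono _ _ (Finset.insert_subset_insert _ h)) 1
        have hgstep : ∀ (X : Finset α) (w : α), g (insert w X) ≤ g X + 1 := by
          intro X w
          have hcomm : insert v (insert w X) = insert w (insert v X) :=
            Finset.insert_comm _ _ _
          have := hstep (insert v X) w
          have h1' := hins1 X
          simp only [hgdef, hcomm]
          omega
        have hgsub : ∀ X Y : Finset α, g (X ∪ Y) + g (X ∩ Y) ≤ g X + g Y := by
          intro X Y
          have hu : (insert v X) ∪ (insert v Y) = insert v (X ∪ Y) := by
            ext e; simp only [Finset.mem_union, Finset.mem_insert]; tauto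
          have hi : (insert v X) ∩ (insert v Y) = insert v (X ∩ Y) := by
            ext e; simp only [Finset.mem_inter, Finset.mem_insert]; tauto
          have := hsub (insert v X) (insert v Y)
          rw [hu, hi] at this
          have := hins1 X; have := hins1 Y; have := hins1 (X ∪ Y); have := hins1 (X ∩ Y)
          simp only [hgdef]
          omega
        have key := ih g hg0 hgmono hgstep hgsub t (T.erase v) lvl L C (by omega)
          (fun e he => h1 e (Finset.mem_of_mem_erase he))
          (fun e he => h2 e (Finset.mem_of_mem_erase he))
          (fun e he => h3 e (Finset.mem_of_mem_erase he))
          (fun e he => h4 e (Finset.mem_of_mem_erase he))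
        -- chain (2):
        have chain2 : ∑ i ∈ Finset.Icc 1 t, f (T.filter (fun e => lvl e = i)) ≤
            (∑ i ∈ Finset.Icc 1 t, g ((T.erase v).filter (fun e => lvl e = i))) + t := by
          have hcardIcc : (Finset.Icc 1 t).card = t := by
            rw [Nat.card_Icc]; omega
          calc ∑ i ∈ Finset.Icc 1 t, f (T.filter (fun e => lvl e = i))
              ≤ ∑ i ∈ Finset.Icc 1 t, (g ((T.erase v).filter (fun e => lvl e = i)) + 1) := by
                refine Finset.sum_le_sum fun i _ => ?_
                have hs := hmono _ _ (hfilter_sub (fun e => lvl e = i))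
                have h1' := hins1 ((T.erase v).filter (fun e => lvl e = i))
                simp only [hgdef]
                omega
            _ = (∑ i ∈ Finset.Icc 1 t, g ((T.erase v).filter (fun e => lvl e = i))) + t := by
                rw [Finset.sum_add_distrib, Finset.sum_const, hcardIcc, smul_eq_mul, mul_one]
        -- chain (1):
        have chain1 : (∑ c ∈ C, g ((T.erase v).filter (fun e => c ∈ L e))) + t ≤
            ∑ c ∈ C, f (T.filter (fun e => c ∈ L e)) := by
          have hLvC : L v ⊆ C := h4 v hvT
          have hLvcard : t ≤ (L v).card := hvlvl ▸ h3 v hvT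
          have hsplitf : ∑ c ∈ C, f (T.filter (fun e => c ∈ L e)) =
              (∑ c ∈ C \ L v, f (T.filter (fun e => c ∈ L e))) +
              ∑ c ∈ L v, f (T.filter (fun e => c ∈ L e)) :=
            (Finset.sum_sdiff hLvC).symm
          have hsplitg : ∑ c ∈ C, g ((T.erase v).filter (fun e => c ∈ L e)) =
              (∑ c ∈ C \ L v, g ((T.erase v).filter (fun e => c ∈ L e))) +
              ∑ c ∈ L v, g ((T.erase v).filter (fun e => c ∈ L e)) :=
            (Finset.sum_sdiff hLvC).symm
          have hterm1 : ∀ c ∈ C \ L v,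
              g ((T.erase v).filter (fun e => c ∈ L e)) ≤ f (T.filter (fun e => c ∈ L e)) := by
            intro c hc
            have hcv : c ∉ L v := (Finset.mem_sdiff.mp hc).2
            have heq : T.filter (fun e => c ∈ L e) = (T.erase v).filter (fun e => c ∈ L e) := by
              rw [herase_filter, Finset.erase_eq_of_notMem]
              simp only [Finset.mem_filter, not_and]
              exact fun _ h => hcv h
            have := hstep ((T.erase v).filter (fun e => c ∈ L e)) v
            simp only [hgdef]
            rw [heq]
            omega
          have hterm2 : ∀ c ∈ L v,
              g ((T.erase v).filter (fun e => c ∈ L e)) + 1 = f (T.filter (fun e => c ∈ L e)) := by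
            intro c hc
            have heq : T.filter (fun e => c ∈ L e) =
                insert v ((T.erase v).filter (fun e => c ∈ L e)) := by
              ext e
              rw [herase_filter]
              simp only [Finset.mem_filter, Finset.mem_insert, Finset.mem_erase]
              by_cases hev : e = v
              · subst hev; simp [hvT, hc]
              · simp [hev]
            have h1' := hins1 ((T.erase v).filter (fun e => c ∈ L e))
            rw [heq]
            simp only [hgdef]
            omega
          rw [hsplitf, hsplitg]
          have hs1 : ∑ c ∈ C \ L v, g ((T.erase v).filter (fun e => c ∈ L e)) ≤
              ∑ c ∈ C \ L v, f (T.filter (fun e => c ∈ L e)) :=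
            Finset.sum_le_sum hterm1
          have hs2 : (∑ c ∈ L v, g ((T.erase v).filter (fun e => c ∈ L e))) + (L v).card =
              ∑ c ∈ L v, f (T.filter (fun e => c ∈ L e)) := by
            rw [← Finset.sum_congr rfl hterm2, Finset.sum_add_distrib, Finset.sum_const,
              smul_eq_mul, mul_one]
          omega
        calc ∑ i ∈ Finset.Icc 1 t, f (T.filter (fun e => lvl e = i))
            ≤ (∑ i ∈ Finset.Icc 1 t, g ((T.erase v).filter (fun e => lvl e = i))) + t := chain2
          _ ≤ (∑ c ∈ C, g ((T.erase v).filter (fun e => c ∈ L e))) + t := by omega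
          _ ≤ ∑ c ∈ C, f (T.filter (fun e => c ∈ L e)) := chain1

end LemB
section Rado
open Finset
variable {α : Type*} [DecidableEq α]

lemma rado (M : Matroid α) (E : Finset α) (C : Finset ℕ) :
    ∀ (n : ℕ) (L : α → Finset ℕ),
    (∀ e ∈ E, L e ⊆ C) →
    (∀ T ⊆ E, T.card ≤ ∑ c ∈ C, frk M (T.filter (fun e => c ∈ L e))) →
    ∑ e ∈ E, (L e).card ≤ n →
    ∃ col : α → ℕ, (∀ e ∈ E, col e ∈ L e) ∧
      ∀ i : ℕ, M.Indep ↑(E.filter (fun e => col e = i)) := by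
  intro n
  induction n using Nat.strong_induction_on with
  | _ n ih =>
  intro L hLC hall hn
  have hnonempty : ∀ e ∈ E, (L e).Nonempty := by
    intro e he
    rw [Finset.nonempty_iff_ne_empty]
    intro hLe
    have h1 := hall {e} (Finset.singleton_subset_iff.mpr he)
    have h2 : ∀ c ∈ C, frk M (({e} : Finset α).filter (fun a => c ∈ L a)) = 0 := by
      intro c _
      rw [Finset.filter_singleton, if_neg (by rw [hLe]; exact Finset.notMem_empty c)]
      exact frk_empty M
    rw [Finset.sum_congr rfl h2] at h1
    simp at h1
  by_cases hA : ∀ e ∈ E, (L e).card ≤ 1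
  · -- base case: all lists are singletons
    refine ⟨fun e => if h : (L e).Nonempty then (L e).min' h else 0, ?_, ?_⟩
    · intro e he
      show (if h : (L e).Nonempty then (L e).min' h else 0) ∈ L e
      rw [dif_pos (hnonempty e he)]
      exact (L e).min'_mem _
    · intro i
      set col : α → ℕ := fun e => if h : (L e).Nonempty then (L e).min' h else 0 with hcoldef
      set T := E.filter (fun e => col e = i) with hTdef
      rcases Finset.eq_empty_or_nonempty T with hTe | ⟨e0, he0⟩
      · rw [hTe]; simpa using M.empty_indep
      have hLeq : ∀ e ∈ T, L e = {i} := by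
        intro e he
        obtain ⟨heE, hei⟩ := Finset.mem_filter.mp he
        obtain ⟨a, ha⟩ := Finset.card_eq_one.mp
          (le_antisymm (hA e heE) (Finset.card_pos.mpr (hnonempty e heE)))
        have : col e = a := by
          simp only [hcoldef, dif_pos (hnonempty e heE), ha, Finset.min'_singleton]
        rw [ha, ← this, hei]
      have he0E := (Finset.mem_filter.mp he0).1
      have hiC : i ∈ C := by
        have := hLC e0 he0E
        rw [hLeq e0 he0] at this
        exact this (Finset.mem_singleton_self i)
      have h1 := hall T (Finset.filter_subset _ _)
      have h2 : ∑ c ∈ C, frk M (T.filter (fun e => c ∈ L e)) = frk M T := by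
        rw [Finset.sum_eq_single_of_mem i hiC]
        · congr 1
          refine Finset.filter_true_of_mem fun e he => ?_
          rw [hLeq e he]; exact Finset.mem_singleton_self i
        · intro c _ hci
          rw [Finset.filter_eq_empty_iff.mpr, frk_empty]
          intro e he
          rw [hLeq e he]
          simpa using hci
      rw [h2] at h1
      exact indep_of_card_le_frk h1
  · -- inductive step
    push_neg at hA
    obtain ⟨e0, he0E, he0⟩ := hA
    obtain ⟨x, hx, y, hy, hxy⟩ := Finset.one_lt_card.mp he0
    set L1 := Function.update L e0 ((L e0).erase x) with hL1def
    set L2 := Function.update L e0 ((L e0).erase y) with hL2def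
    have hL1C : ∀ e ∈ E, L1 e ⊆ C := by
      intro e he
      rcases eq_or_ne e e0 with rfl | hne
      · rw [hL1def, Function.update_self]
        exact (Finset.erase_subset _ _).trans (hLC e he)
      · rw [hL1def, Function.update_of_ne hne]; exact hLC e he
    have hL2C : ∀ e ∈ E, L2 e ⊆ C := by
      intro e he
      rcases eq_or_ne e e0 with rfl | hne
      · rw [hL2def, Function.update_self]
        exact (Finset.erase_subset _ _).trans (hLC e he)
      · rw [hL2def, Function.update_of_ne hne]; exact hLC e he
    have hsumgen : ∀ z ∈ L e0, ∑ e ∈ E, ((Function.update L e0 ((L e0).erase z)) e).card + 1 =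
        ∑ e ∈ E, (L e).card := by
      intro z hz
      rw [Finset.sum_eq_sum_sdiff_singleton_add he0E
          (fun e => ((Function.update L e0 ((L e0).erase z)) e).card),
        Finset.sum_eq_sum_sdiff_singleton_add he0E (fun e => (L e).card)]
      have h1 : ∑ e ∈ E \ {e0}, ((Function.update L e0 ((L e0).erase z)) e).card =
          ∑ e ∈ E \ {e0}, (L e).card := by
        refine Finset.sum_congr rfl fun e he => ?_
        have hne : e ≠ e0 := by simpa using (Finset.mem_sdiff.mp he).2
        rw [Function.update_of_ne hne]
      rw [h1, Function.update_self, Finset.card_erase_of_mem hz]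
      have := Finset.card_pos.mpr ⟨z, hz⟩
      omega
    have hsum1 : ∑ e ∈ E, (L1 e).card + 1 = ∑ e ∈ E, (L e).card := hsumgen x hx
    have hsum2 : ∑ e ∈ E, (L2 e).card + 1 = ∑ e ∈ E, (L e).card := hsumgen y hy
    have hnpos : 2 ≤ n := by
      have h5 : (L e0).card ≤ ∑ e ∈ E, (L e).card := by
        apply Finset.single_le_sum (f := fun e => (L e).card) (fun e _ => Nat.zero_le _) he0E
      omega
    have key : (∀ T ⊆ E, T.card ≤ ∑ c ∈ C, frk M (T.filter (fun e => c ∈ L1 e))) ∨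
        (∀ T ⊆ E, T.card ≤ ∑ c ∈ C, frk M (T.filter (fun e => c ∈ L2 e))) := by
      by_contra hcon
      rw [not_or] at hcon
      obtain ⟨hc1, hc2⟩ := hcon
      push_neg at hc1 hc2
      obtain ⟨T1, hT1E, hT1⟩ := hc1
      obtain ⟨T2, hT2E, hT2⟩ := hc2
      have he0T1 : e0 ∈ T1 := by
        by_contra h
        have heq : ∀ c : ℕ, T1.filter (fun e => c ∈ L1 e) = T1.filter (fun e => c ∈ L e) :=
          fun c => Finset.filter_congr fun e he => by
            rw [hL1def, Function.update_of_ne (fun hee : e = e0 => h (hee ▸ he))]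
        have h2 := hall T1 hT1E
        have h3 : ∑ c ∈ C, frk M (T1.filter (fun e => c ∈ L1 e)) =
            ∑ c ∈ C, frk M (T1.filter (fun e => c ∈ L e)) :=
          Finset.sum_congr rfl fun c _ => by rw [heq c]
        omega
      have he0T2 : e0 ∈ T2 := by
        by_contra h
        have heq : ∀ c : ℕ, T2.filter (fun e => c ∈ L2 e) = T2.filter (fun e => c ∈ L e) :=
          fun c => Finset.filter_congr fun e he => by
            rw [hL2def, Function.update_of_ne (fun hee : e = e0 => h (hee ▸ he))]
        have h2 := hall T2 hT2E
        have h3 : ∑ c ∈ C, frk M (T2.filter (fun e => c ∈ L2 e)) =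
            ∑ c ∈ C, frk M (T2.filter (fun e => c ∈ L e)) :=
          Finset.sum_congr rfl fun c _ => by rw [heq c]
        omega
      set U := T1 ∪ T2 with hUdef
      set V := (T1 ∩ T2).erase e0 with hVdef
      have hkey : ∀ c ∈ C,
          frk M (U.filter (fun e => c ∈ L e)) + frk M (V.filter (fun e => c ∈ L e)) ≤
          frk M (T1.filter (fun e => c ∈ L1 e)) + frk M (T2.filter (fun e => c ∈ L2 e)) := by
        intro c _
        set X := T1.filter (fun e => c ∈ L1 e) with hXdef
        set Y := T2.filter (fun e => c ∈ L2 e) with hYdef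
        have hU : U.filter (fun e => c ∈ L e) ⊆ X ∪ Y := by
          intro e he
          obtain ⟨heU, hcL⟩ := Finset.mem_filter.mp he
          rcases eq_or_ne e e0 with rfl | hne
          · rcases eq_or_ne c x with rfl | hcx
            · refine Finset.mem_union_right _ (Finset.mem_filter.mpr ⟨he0T2, ?_⟩)
              rw [hL2def, Function.update_self]
              exact Finset.mem_erase.mpr ⟨hxy, hcL⟩
            · refine Finset.mem_union_left _ (Finset.mem_filter.mpr ⟨he0T1, ?_⟩)
              rw [hL1def, Function.update_self]
              exact Finset.mem_erase.mpr ⟨hcx, hcL⟩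
          · rcases Finset.mem_union.mp heU with h | h
            · refine Finset.mem_union_left _ (Finset.mem_filter.mpr ⟨h, ?_⟩)
              rw [hL1def, Function.update_of_ne hne]; exact hcL
            · refine Finset.mem_union_right _ (Finset.mem_filter.mpr ⟨h, ?_⟩)
              rw [hL2def, Function.update_of_ne hne]; exact hcL
        have hV : V.filter (fun e => c ∈ L e) ⊆ X ∩ Y := by
          intro e he
          obtain ⟨heV, hcL⟩ := Finset.mem_filter.mp he
          obtain ⟨hne, heI⟩ := Finset.mem_erase.mp heV
          obtain ⟨h1, h2⟩ := Finset.mem_inter.mp heI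
          refine Finset.mem_inter.mpr ⟨Finset.mem_filter.mpr ⟨h1, ?_⟩,
            Finset.mem_filter.mpr ⟨h2, ?_⟩⟩
          · rw [hL1def, Function.update_of_ne hne]; exact hcL
          · rw [hL2def, Function.update_of_ne hne]; exact hcL
        calc frk M (U.filter (fun e => c ∈ L e)) + frk M (V.filter (fun e => c ∈ L e))
            ≤ frk M (X ∪ Y) + frk M (X ∩ Y) := add_le_add (frk_mono hU) (frk_mono hV)
          _ ≤ frk M X + frk M Y := frk_submod X Y
      have hsumle := Finset.sum_le_sum hkey
      rw [Finset.sum_add_distrib, Finset.sum_add_distrib] at hsumle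
      have hallU := hall U (Finset.union_subset hT1E hT2E)
      have hallV := hall V (((T1 ∩ T2).erase_subset e0).trans
        (Finset.inter_subset_left.trans hT1E))
      have hcards := Finset.card_union_add_card_inter T1 T2
      rw [← hUdef] at hcards
      have he0I : e0 ∈ T1 ∩ T2 := Finset.mem_inter.mpr ⟨he0T1, he0T2⟩
      have hVcard : V.card + 1 = (T1 ∩ T2).card := by
        rw [hVdef, Finset.card_erase_of_mem he0I]
        have := Finset.card_pos.mpr ⟨e0, he0I⟩
        omega
      omega
    rcases key with hK | hK
    · obtain ⟨col, hcol, hind⟩ := ih (n - 1) (by omega) L1 hL1C hK (by omega)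
      refine ⟨col, fun e he => ?_, hind⟩
      have := hcol e he
      rcases eq_or_ne e e0 with rfl | hne
      · rw [hL1def, Function.update_self] at this
        exact Finset.mem_of_mem_erase this
      · rwa [hL1def, Function.update_of_ne hne] at this
    · obtain ⟨col, hcol, hind⟩ := ih (n - 1) (by omega) L2 hL2C hK (by omega)
      refine ⟨col, fun e he => ?_, hind⟩
      have := hcol e he
      rcases eq_or_ne e e0 with rfl | hne
      · rw [hL2def, Function.update_self] at this
        exact Finset.mem_of_mem_erase this
      · rwa [hL2def, Function.update_of_ne hne] at this

end Rado
/-- If the ground set of a matroid is partitioned into independent sets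
`I_1, ..., I_k`, and `ℓ(e) = i` for `e ∈ I_i`, then the matroid is colorable
from every list assignment with `|L(e)| = ℓ(e)`. -/
theorem list_coloring_from_partition {α : Type*} (M : Matroid α) (hfin : M.E.Finite)
    (k : ℕ) (I : Fin k → Set α)
    (hind : ∀ i, M.Indep (I i))
    (hdisj : ∀ i j, i ≠ j → Disjoint (I i) (I j))
    (hunion : (⋃ i, I i) = M.E)
    (L : α → Finset ℕ)
    (hL : ∀ i : Fin k, ∀ e ∈ I i, (L e).card = (i : ℕ) + 1) :
    ∃ c : α → ℕ, (∀ e ∈ M.E, c e ∈ L e) ∧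
      ∀ i : ℕ, M.Indep {e ∈ M.E | c e = i} := by
  classical
  set E : Finset α := hfin.toFinset with hEdef
  have hmemE : ∀ e, e ∈ E ↔ e ∈ M.E := fun e => hfin.mem_toFinset
  have hex : ∀ e ∈ M.E, ∃ i : Fin k, e ∈ I i := by
    intro e he
    rw [← hunion] at he
    simpa using he
  set idx : α → ℕ :=
    fun e => if h : ∃ i : Fin k, e ∈ I i then ((h.choose : Fin k) : ℕ) + 1 else 0 with hidxdef
  have hidx_eq : ∀ (e : α) (h : ∃ i : Fin k, e ∈ I i), idx e = (h.choose : ℕ) + 1 := by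
    intro e h
    rw [hidxdef]
    exact dif_pos h
  set C : Finset ℕ := E.biUnion L with hCdef
  have hLC : ∀ e ∈ E, L e ⊆ C := fun e he => Finset.subset_biUnion_of_mem L he
  have hall : ∀ T ⊆ E, T.card ≤ ∑ c ∈ C, frk M (T.filter (fun e => c ∈ L e)) := by
    intro T hTE
    have hTME : ∀ e ∈ T, e ∈ M.E := fun e he => (hmemE e).mp (hTE he)
    have h1 : ∀ e ∈ T, 1 ≤ idx e := by
      intro e he
      rw [hidx_eq e (hex e (hTME e he))]
      omega
    have h2 : ∀ e ∈ T, idx e ≤ k := by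
      intro e he
      have h := hex e (hTME e he)
      rw [hidx_eq e h]
      have := h.choose.isLt
      omega
    have h3 : ∀ e ∈ T, idx e ≤ (L e).card := by
      intro e he
      have h := hex e (hTME e he)
      rw [hidx_eq e h, hL h.choose e h.choose_spec]
    have key := lemB (k + T.card) (frk M) (frk_empty M) (fun X Y h => frk_mono h)
      (fun X v => frk_insert_le X v) (fun X Y => frk_submod X Y) k T idx L C le_rfl
      h1 h2 h3 (fun e he => hLC e (hTE he))
    have hfib : T.card = ∑ i ∈ Finset.Icc 1 k, (T.filter (fun e => idx e = i)).card :=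
      Finset.card_eq_sum_card_fiberwise fun e he =>
        Finset.mem_Icc.mpr ⟨h1 e he, h2 e he⟩
    have hfrk_fib : ∀ i ∈ Finset.Icc 1 k,
        frk M (T.filter (fun e => idx e = i)) = (T.filter (fun e => idx e = i)).card := by
      intro i hi
      obtain ⟨hi1, hik⟩ := Finset.mem_Icc.mp hi
      refine frk_of_indep ((hind ⟨i - 1, by omega⟩).subset ?_)
      intro e he'
      obtain ⟨heT, hei⟩ := Finset.mem_filter.mp (by exact_mod_cast he')
      have h := hex e (hTME e heT)
      have hc : (h.choose : ℕ) = i - 1 := by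
        have := hidx_eq e h
        omega
      have : h.choose = (⟨i - 1, by omega⟩ : Fin k) := Fin.ext hc
      exact this ▸ h.choose_spec
    calc T.card = ∑ i ∈ Finset.Icc 1 k, (T.filter (fun e => idx e = i)).card := hfib
      _ = ∑ i ∈ Finset.Icc 1 k, frk M (T.filter (fun e => idx e = i)) :=
          (Finset.sum_congr rfl hfrk_fib).symm
      _ ≤ ∑ c ∈ C, frk M (T.filter (fun e => c ∈ L e)) := key
  obtain ⟨col, hcol, hindep⟩ := rado M E C (∑ e ∈ E, (L e).card) L hLC hall le_rfl
  refine ⟨col, fun e he => hcol e ((hmemE e).mpr he), fun i => ?_⟩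
  have hset : {e ∈ M.E | col e = i} = ↑(E.filter (fun e => col e = i)) := by
    ext e
    simp only [Set.mem_setOf_eq, Finset.coe_filter, hmemE]
  rw [hset]
  exact hindep i
end

section
/- Let B_1 and B_2 be bases of a matroid M. Then for every subset A_1 ⊆ B_1 there exists a subset A_2 ⊆ B_2 such that both (B_1 \ A_1) ∪ A_2 and (B_2 \ A_2) ∪ A_1 are bases of M. (Multiple symmetric exchange property.) -/
open Set

namespace MSE

variable {α : Type*} {M : Matroid α}

/-- The (finite) rank of a set in a matroid: the `ncard` of an arbitrary `Basis'`. -/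
noncomputable def rk (M : Matroid α) (X : Set α) : ℕ :=
  (M.exists_isBasis' X).choose.ncard

lemma basis'_ncard {I X : Set α} (hI : M.IsBasis' I X) : I.ncard = rk M X := by
  have h := (M.exists_isBasis' X).choose_spec
  rw [rk, Set.ncard_def, Set.ncard_def, hI.encard_eq_encard h]

lemma exists_basis'_rk (M : Matroid α) (X : Set α) :
    ∃ I, M.IsBasis' I X ∧ I.ncard = rk M X := by
  obtain ⟨I, hI⟩ := M.exists_isBasis' X
  exact ⟨I, hI, basis'_ncard hI⟩

variable (hfin : M.E.Finite)

include hfin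

lemma indep_finite {I : Set α} (hI : M.Indep I) : I.Finite :=
  hfin.subset hI.subset_ground

lemma ncard_le_rk {I X : Set α} (hI : M.Indep I) (hIX : I ⊆ X) :
    I.ncard ≤ rk M X := by
  obtain ⟨J, hJ, hIJ⟩ := hI.subset_isBasis'_of_subset hIX
  rw [← basis'_ncard hJ]
  exact Set.ncard_le_ncard hIJ (indep_finite hfin hJ.indep)

lemma rk_le_ncard {X : Set α} (hX : X ⊆ M.E) : rk M X ≤ X.ncard := by
  obtain ⟨I, hI, hIc⟩ := exists_basis'_rk M X
  rw [← hIc]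
  exact Set.ncard_le_ncard hI.subset (hfin.subset hX)

lemma rk_mono {X Y : Set α} (hXY : X ⊆ Y) : rk M X ≤ rk M Y := by
  obtain ⟨I, hI, hIc⟩ := exists_basis'_rk M X
  rw [← hIc]
  exact ncard_le_rk hfin hI.indep (hI.subset.trans hXY)

lemma indep_rk_eq {X : Set α} (hX : M.Indep X) : rk M X = X.ncard :=
  (basis'_ncard (hX.isBasis_self.isBasis')).symm

lemma indep_of_rk_eq {X : Set α} (hX : X ⊆ M.E) (h : rk M X = X.ncard) : M.Indep X := by
  obtain ⟨I, hI, hIc⟩ := exists_basis'_rk M X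
  have : I = X :=
    Set.eq_of_subset_of_ncard_le hI.subset (by omega) (hfin.subset hX)
  exact this ▸ hI.indep

lemma rk_submod (X Y : Set α) (hX : X ⊆ M.E) (hY : Y ⊆ M.E) :
    rk M (X ∪ Y) + rk M (X ∩ Y) ≤ rk M X + rk M Y := by
  obtain ⟨I, hI, hIc⟩ := exists_basis'_rk M (X ∩ Y)
  obtain ⟨B, hB, hIB⟩ := hI.indep.subset_isBasis'_of_subset
    (hI.subset.trans (inter_subset_left.trans subset_union_left))
  have hBfin : B.Finite := indep_finite hfin hB.indep
  have h1 : (B ∩ X).ncard + (B ∩ Y).ncard = B.ncard + (B ∩ (X ∩ Y)).ncard := by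
    rw [← Set.ncard_union_add_ncard_inter (B ∩ X) (B ∩ Y) (hBfin.subset inter_subset_left)
      (hBfin.subset inter_subset_left), ← inter_union_distrib_left, ← inter_inter_distrib_left]
    congr 2
    exact inter_eq_self_of_subset_left hB.subset
  have hX1 : (B ∩ X).ncard ≤ rk M X := ncard_le_rk hfin (hB.indep.subset inter_subset_left)
    inter_subset_right
  have hY1 : (B ∩ Y).ncard ≤ rk M Y := ncard_le_rk hfin (hB.indep.subset inter_subset_left)
    inter_subset_right
  have hII : I.ncard ≤ (B ∩ (X ∩ Y)).ncard :=
    Set.ncard_le_ncard (subset_inter hIB hI.subset) (hBfin.subset inter_subset_left)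
  rw [← basis'_ncard hB, ← hIc] at *
  omega

lemma rk_pair {A B U Z : Set α} (hA : A ⊆ M.E) (hB : B ⊆ M.E) (hU : A ∪ B = U)
    (hZ : Z ⊆ A ∩ B) : rk M U + rk M Z ≤ rk M A + rk M B := by
  have hsub := rk_submod hfin A B hA hB
  rw [hU] at hsub
  exact le_trans (add_le_add_right (rk_mono hfin hZ) _) hsub

lemma partition_lemma :
    ∀ (n : ℕ) (S I J : Set α), S ⊆ M.E → I ⊆ M.E → J ⊆ M.E → S.ncard = n →
    (∀ X ⊆ S, X.ncard + I.ncard + J.ncard ≤ rk M (I ∪ X) + rk M (J ∪ X)) →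
    ∃ C D : Set α, C ∪ D = S ∧ Disjoint C D ∧
      rk M (I ∪ C) = I.ncard + C.ncard ∧ rk M (J ∪ D) = J.ncard + D.ncard := by
  intro n
  induction n with
  | zero =>
    intro S I J hS hI hJ hcard hyp
    have hSfin : S.Finite := hfin.subset hS
    have hSe : S = ∅ := (Set.ncard_eq_zero hSfin).mp hcard
    have h0 := hyp ∅ (empty_subset _)
    simp only [Set.ncard_empty, union_empty, zero_add] at h0
    have hIle := rk_le_ncard hfin hI
    have hJle := rk_le_ncard hfin hJ
    exact ⟨∅, ∅, by simp [hSe], disjoint_empty _, by simp; omega, by simp; omega⟩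
  | succ n ih =>
    intro S I J hS hI hJ hcard hyp
    have hSfin : S.Finite := hfin.subset hS
    obtain ⟨e, he⟩ : S.Nonempty := Set.nonempty_of_ncard_ne_zero (by omega)
    have hS' : S \ {e} ⊆ M.E := diff_subset.trans hS
    have hcard' : (S \ {e}).ncard = n := by
      rw [Set.ncard_diff_singleton_of_mem he]; omega
    have hIfin : I.Finite := hfin.subset hI
    have hJfin : J.Finite := hfin.subset hJ
    have heE : e ∈ M.E := hS he
    by_cases heI : e ∈ I
    · -- `e` must go to the `D` side.
      have heJ : e ∉ J := by
        intro heJ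
        have h1 := hyp {e} (singleton_subset_iff.mpr he)
        rw [union_eq_self_of_subset_right (singleton_subset_iff.mpr heI),
          union_eq_self_of_subset_right (singleton_subset_iff.mpr heJ),
          Set.ncard_singleton] at h1
        have := rk_le_ncard hfin hI
        have := rk_le_ncard hfin hJ
        omega
      have hyp' : ∀ X ⊆ S \ {e},
          X.ncard + I.ncard + (insert e J).ncard ≤ rk M (I ∪ X) + rk M (insert e J ∪ X) := by
        intro X hX
        have heX : e ∉ X := fun h => (hX h).2 rfl
        have h1 := hyp (insert e X) (insert_subset he (hX.trans diff_subset))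
        rw [Set.ncard_insert_of_notMem heX (hSfin.subset (hX.trans diff_subset)),
          union_insert, insert_eq_of_mem (mem_union_left X heI), union_insert,
          ← insert_union] at h1
        rw [Set.ncard_insert_of_notMem heJ hJfin]
        omega
      obtain ⟨C, D, hCD, hdisj, hIC, hJD⟩ := ih (S \ {e}) I (insert e J) hS'
        hI (insert_subset heE hJ) hcard' hyp'
      have heC : e ∉ C := fun h => (hCD ▸ mem_union_left D h : e ∈ S \ {e}).2 rfl
      have heD : e ∉ D := fun h => (hCD ▸ mem_union_right C h : e ∈ S \ {e}).2 rfl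
      have hDfin : D.Finite := hSfin.subset ((hCD ▸ subset_union_right).trans diff_subset)
      refine ⟨C, insert e D, ?_, ?_, hIC, ?_⟩
      · rw [union_insert, hCD, insert_diff_singleton, insert_eq_of_mem he]
      · rw [Set.insert_eq, Set.disjoint_union_right]; exact ⟨Set.disjoint_singleton_right.mpr heC, hdisj⟩
      · rw [union_insert, ← insert_union, hJD, Set.ncard_insert_of_notMem heJ hJfin,
          Set.ncard_insert_of_notMem heD hDfin]
        omega
    · by_cases heJ : e ∈ J
      · -- `e` must go to the `C` side.
        have hyp' : ∀ X ⊆ S \ {e},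
            X.ncard + (insert e I).ncard + J.ncard ≤ rk M (insert e I ∪ X) + rk M (J ∪ X) := by
          intro X hX
          have heX : e ∉ X := fun h => (hX h).2 rfl
          have h1 := hyp (insert e X) (insert_subset he (hX.trans diff_subset))
          rw [Set.ncard_insert_of_notMem heX (hSfin.subset (hX.trans diff_subset)),
            union_insert, union_insert, insert_eq_of_mem (mem_union_left X heJ),
            ← insert_union] at h1
          rw [Set.ncard_insert_of_notMem heI hIfin]
          omega
        obtain ⟨C, D, hCD, hdisj, hIC, hJD⟩ := ih (S \ {e}) (insert e I) J hS'
          (insert_subset heE hI) hJ hcard' hyp'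
        have heC : e ∉ C := fun h => (hCD ▸ mem_union_left D h : e ∈ S \ {e}).2 rfl
        have heD : e ∉ D := fun h => (hCD ▸ mem_union_right C h : e ∈ S \ {e}).2 rfl
        have hCfin : C.Finite := hSfin.subset ((hCD ▸ subset_union_left).trans diff_subset)
        refine ⟨insert e C, D, ?_, ?_, ?_, hJD⟩
        · rw [insert_union, hCD, insert_diff_singleton, insert_eq_of_mem he]
        · rw [Set.insert_eq, Set.disjoint_union_left]; exact ⟨Set.disjoint_singleton_left.mpr heD, hdisj⟩
        · rw [union_insert, ← insert_union, hIC, Set.ncard_insert_of_notMem heI hIfin,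
            Set.ncard_insert_of_notMem heC hCfin]
          omega
      · -- e ∉ I ∪ J : try both sides
        by_cases hC : ∀ X ⊆ S \ {e},
            X.ncard + (insert e I).ncard + J.ncard ≤ rk M (insert e I ∪ X) + rk M (J ∪ X)
        · obtain ⟨C, D, hCD, hdisj, hIC, hJD⟩ := ih (S \ {e}) (insert e I) J hS'
            (insert_subset heE hI) hJ hcard' hC
          have heC : e ∉ C := fun h => (hCD ▸ mem_union_left D h : e ∈ S \ {e}).2 rfl
          have heD : e ∉ D := fun h => (hCD ▸ mem_union_right C h : e ∈ S \ {e}).2 rfl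
          have hCfin : C.Finite := hSfin.subset ((hCD ▸ subset_union_left).trans diff_subset)
          refine ⟨insert e C, D, ?_, ?_, ?_, hJD⟩
          · rw [insert_union, hCD, insert_diff_singleton, insert_eq_of_mem he]
          · rw [Set.insert_eq, Set.disjoint_union_left]; exact ⟨Set.disjoint_singleton_left.mpr heD, hdisj⟩
          · rw [union_insert, ← insert_union, hIC, Set.ncard_insert_of_notMem heI hIfin,
              Set.ncard_insert_of_notMem heC hCfin]
            omega
        · by_cases hD : ∀ X ⊆ S \ {e},
              X.ncard + I.ncard + (insert e J).ncard ≤ rk M (I ∪ X) + rk M (insert e J ∪ X)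
          · obtain ⟨C, D, hCD, hdisj, hIC, hJD⟩ := ih (S \ {e}) I (insert e J) hS'
              hI (insert_subset heE hJ) hcard' hD
            have heC : e ∉ C := fun h => (hCD ▸ mem_union_left D h : e ∈ S \ {e}).2 rfl
            have heD : e ∉ D := fun h => (hCD ▸ mem_union_right C h : e ∈ S \ {e}).2 rfl
            have hDfin : D.Finite := hSfin.subset ((hCD ▸ subset_union_right).trans diff_subset)
            refine ⟨C, insert e D, ?_, ?_, hIC, ?_⟩
            · rw [union_insert, hCD, insert_diff_singleton, insert_eq_of_mem he]
            · rw [Set.insert_eq, Set.disjoint_union_right]; exact ⟨Set.disjoint_singleton_right.mpr heC, hdisj⟩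
            · rw [union_insert, ← insert_union, hJD, Set.ncard_insert_of_notMem heJ hJfin,
                Set.ncard_insert_of_notMem heD hDfin]
              omega
          · exfalso
            push_neg at hC hD
            obtain ⟨X₁, hX₁S, h1⟩ := hC
            obtain ⟨X₂, hX₂S, h2⟩ := hD
            have hX₁S' : X₁ ⊆ S := hX₁S.trans diff_subset
            have hX₂S' : X₂ ⊆ S := hX₂S.trans diff_subset
            have hX₁fin : X₁.Finite := hSfin.subset hX₁S'
            have hX₂fin : X₂.Finite := hSfin.subset hX₂S'
            have heX₁ : e ∉ X₁ := fun h => (hX₁S h).2 rfl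
            have heX₂ : e ∉ X₂ := fun h => (hX₂S h).2 rfl
            rw [Set.ncard_insert_of_notMem heI hIfin] at h1
            rw [Set.ncard_insert_of_notMem heJ hJfin] at h2
            have hIX₁ : insert e I ∪ X₁ ⊆ M.E :=
              union_subset (insert_subset heE hI) (hX₁S'.trans hS)
            have hIX₂ : I ∪ X₂ ⊆ M.E := union_subset hI (hX₂S'.trans hS)
            have hJX₁ : J ∪ X₁ ⊆ M.E := union_subset hJ (hX₁S'.trans hS)
            have hJX₂ : insert e J ∪ X₂ ⊆ M.E :=
              union_subset (insert_subset heE hJ) (hX₂S'.trans hS)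
            have sub1 : rk M (insert e (I ∪ (X₁ ∪ X₂))) + rk M (I ∪ X₁ ∩ X₂)
                ≤ rk M (insert e I ∪ X₁) + rk M (I ∪ X₂) := by
              refine rk_pair hfin hIX₁ hIX₂ ?_ ?_
              · ext x; simp only [mem_insert_iff, mem_union]; tauto
              · intro x hx
                simp only [mem_union, mem_inter_iff, mem_insert_iff] at hx ⊢
                tauto
            have sub2 : rk M (insert e (J ∪ (X₁ ∪ X₂))) + rk M (J ∪ X₁ ∩ X₂)
                ≤ rk M (J ∪ X₁) + rk M (insert e J ∪ X₂) := by
              refine rk_pair hfin hJX₁ hJX₂ ?_ ?_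
              · ext x; simp only [mem_insert_iff, mem_union]; tauto
              · intro x hx
                simp only [mem_union, mem_inter_iff, mem_insert_iff] at hx ⊢
                tauto
            have hyp5 := hyp (insert e (X₁ ∪ X₂))
              (insert_subset he (union_subset hX₁S' hX₂S'))
            rw [union_insert, union_insert,
              Set.ncard_insert_of_notMem (fun h => (h.elim heX₁ heX₂ : False))
                (hX₁fin.union hX₂fin)] at hyp5
            have hyp6 := hyp (X₁ ∩ X₂) ((inter_subset_left).trans hX₁S')
            have hcards : (X₁ ∪ X₂).ncard + (X₁ ∩ X₂).ncard = X₁.ncard + X₂.ncard :=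
              Set.ncard_union_add_ncard_inter X₁ X₂ hX₁fin hX₂fin
            omega

lemma indep_ncard_le_base {K B : Set α} (hK : M.Indep K) (hB : M.IsBase B) :
    K.ncard ≤ B.ncard := by
  obtain ⟨B', hB', hKB'⟩ := hK.exists_isBase_superset
  rw [← hB'.ncard_eq_ncard_of_isBase hB]
  exact Set.ncard_le_ncard hKB' (hfin.subset hB'.subset_ground)

lemma base_of_indep_ncard {K B : Set α} (hK : M.Indep K) (hB : M.IsBase B)
    (hcard : B.ncard ≤ K.ncard) : M.IsBase K := by
  obtain ⟨B', hB', hKB'⟩ := hK.exists_isBase_superset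
  have : K = B' := Set.eq_of_subset_of_ncard_le hKB'
    (by rw [hB'.ncard_eq_ncard_of_isBase hB]; exact hcard)
    (hfin.subset hB'.subset_ground)
  exact this ▸ hB'

end MSE

open MSE Set in
/-- Multiple symmetric exchange property: for bases `B₁, B₂` of a matroid and any
`A₁ ⊆ B₁` there is `A₂ ⊆ B₂` such that `(B₁ \ A₁) ∪ A₂` and `(B₂ \ A₂) ∪ A₁`
are both bases. -/
theorem multiple_symmetric_exchange {α : Type*} (M : Matroid α) (hfin : M.E.Finite)
    (B₁ B₂ : Set α) (hB₁ : M.IsBase B₁) (hB₂ : M.IsBase B₂)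
    (A₁ : Set α) (hA₁ : A₁ ⊆ B₁) :
    ∃ A₂ ⊆ B₂, M.IsBase ((B₁ \ A₁) ∪ A₂) ∧ M.IsBase ((B₂ \ A₂) ∪ A₁) := by
  set F := B₁ \ A₁ with hF
  have hAF : A₁ ∪ F = B₁ := union_diff_cancel hA₁
  have hdisjAF : Disjoint A₁ F := disjoint_sdiff_right
  have hB₁E : B₁ ⊆ M.E := hB₁.subset_ground
  have hB₂E : B₂ ⊆ M.E := hB₂.subset_ground
  have hA₁E : A₁ ⊆ M.E := hA₁.trans hB₁E
  have hFE : F ⊆ M.E := diff_subset.trans hB₁E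
  have hA₁fin : A₁.Finite := hfin.subset hA₁E
  have hFfin : F.Finite := hfin.subset hFE
  have hB₁card : A₁.ncard + F.ncard = B₁.ncard := by
    rw [← hAF, Set.ncard_union_eq hdisjAF hA₁fin hFfin]
  have hyp : ∀ X ⊆ B₂, X.ncard + A₁.ncard + F.ncard ≤ rk M (A₁ ∪ X) + rk M (F ∪ X) := by
    intro X hX
    have hXE : X ⊆ M.E := hX.trans hB₂E
    have hXind : M.Indep X := hB₂.indep.subset hX
    have hsub : rk M (B₁ ∪ X) + rk M X ≤ rk M (A₁ ∪ X) + rk M (F ∪ X) := by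
      refine rk_pair hfin (union_subset hA₁E hXE) (union_subset hFE hXE) ?_ ?_
      · rw [← hAF]; ext x; simp only [mem_union]; tauto
      · exact subset_inter subset_union_right subset_union_right
    have hrkX : rk M X = X.ncard := indep_rk_eq hfin hXind
    have hrkB₁ : rk M B₁ = B₁.ncard := indep_rk_eq hfin hB₁.indep
    have hmono : rk M B₁ ≤ rk M (B₁ ∪ X) := rk_mono hfin subset_union_left
    omega
  obtain ⟨C, D, hCD, hdisj, hIC, hJD⟩ :=
    partition_lemma hfin B₂.ncard B₂ A₁ F hB₂E hA₁E hFE rfl hyp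
  have hCB₂ : C ⊆ B₂ := hCD ▸ subset_union_left
  have hDB₂ : D ⊆ B₂ := hCD ▸ subset_union_right
  have hCfin : C.Finite := hfin.subset (hCB₂.trans hB₂E)
  have hDfin : D.Finite := hfin.subset (hDB₂.trans hB₂E)
  have hACE : A₁ ∪ C ⊆ M.E := union_subset hA₁E (hCB₂.trans hB₂E)
  have hFDE : F ∪ D ⊆ M.E := union_subset hFE (hDB₂.trans hB₂E)
  -- from the full-count rank equalities, both unions are independent with exact cardinality
  have hACcard : (A₁ ∪ C).ncard ≤ A₁.ncard + C.ncard := Set.ncard_union_le A₁ C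
  have hFDcard : (F ∪ D).ncard ≤ F.ncard + D.ncard := Set.ncard_union_le F D
  have hACle := rk_le_ncard hfin hACE
  have hFDle := rk_le_ncard hfin hFDE
  have hACind : M.Indep (A₁ ∪ C) := indep_of_rk_eq hfin hACE (by omega)
  have hFDind : M.Indep (F ∪ D) := indep_of_rk_eq hfin hFDE (by omega)
  have hACn : (A₁ ∪ C).ncard = A₁.ncard + C.ncard := by omega
  have hFDn : (F ∪ D).ncard = F.ncard + D.ncard := by omega
  have eS : C.ncard + D.ncard = B₂.ncard := by
    rw [← Set.ncard_union_eq hdisj hCfin hDfin, hCD]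
  have eB : B₂.ncard = B₁.ncard := hB₂.ncard_eq_ncard_of_isBase hB₁
  have h₁ : (A₁ ∪ C).ncard ≤ B₁.ncard := indep_ncard_le_base hfin hACind hB₁
  have h₂ : (F ∪ D).ncard ≤ B₁.ncard := indep_ncard_le_base hfin hFDind hB₁
  have hbase1 : M.IsBase (A₁ ∪ C) := base_of_indep_ncard hfin hACind hB₁ (by omega)
  have hbase2 : M.IsBase (F ∪ D) := base_of_indep_ncard hfin hFDind hB₁ (by omega)
  refine ⟨D, hDB₂, hbase2, ?_⟩
  have hB₂D : B₂ \ D = C := by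
    rw [← hCD, union_diff_right, hdisj.sdiff_eq_left]
  rw [hB₂D, union_comm]
  exact hbase1
end

section
/- Let A and B be bases of a matroid M, and let B = B_1 ⊔ ... ⊔ B_k be a partition of B. Then there exists a partition A = A_1 ⊔ ... ⊔ A_k such that (B \ B_i) ∪ A_i is a basis of M for every 1 ≤ i ≤ k. -/
open Set

namespace GreeneAux

variable {α : Type*} {M : Matroid α}

/-- rank of a set: the cardinality of any `Basis'` of it. -/
noncomputable def rk (M : Matroid α) (X : Set α) : ℕ := (M.exists_isBasis' X).choose.ncard

lemma Basis'.encard_eq_encard' {I J X : Set α} (hI : M.IsBasis' I X) (hJ : M.IsBasis' J X) :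
    I.encard = J.encard :=
  (hI.isBasis_inter_ground).encard_eq_encard (hJ.isBasis_inter_ground)

lemma rk_eq_of_basis' {I X : Set α} (h : M.IsBasis' I X) : rk M X = I.ncard := by
  have := Basis'.encard_eq_encard' (M.exists_isBasis' X).choose_spec h
  rw [rk, Set.ncard_def, this, ← Set.ncard_def]

lemma rk_eq_of_basis {I X : Set α} (h : M.IsBasis I X) : rk M X = I.ncard :=
  rk_eq_of_basis' h.isBasis'

lemma ncard_le_rk_of_subset_closure (hfin : M.E.Finite) {I X : Set α}
    (hI : M.Indep I) (hIX : I ⊆ M.closure X) : I.ncard ≤ rk M X := by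
  obtain ⟨J, hJ⟩ := M.exists_isBasis' X
  have hclJ : M.closure J = M.closure X := hJ.closure_eq_closure
  obtain ⟨I', hI', hII'⟩ := hI.subset_isBasis_of_subset (X := M.closure X) hIX
    (M.closure_subset_ground X)
  have h1 : I'.encard = J.encard := by
    have := hJ.isBasis_closure_right
    exact hI'.encard_eq_encard this
  have hIfin : I'.Finite := hfin.subset (hI'.indep.subset_ground)
  calc I.ncard ≤ I'.ncard := Set.ncard_le_ncard hII' hIfin
    _ = J.ncard := by rw [Set.ncard_def, h1, ← Set.ncard_def]
    _ = rk M X := (rk_eq_of_basis' hJ).symm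

lemma rk_mono (hfin : M.E.Finite) {X Y : Set α} (hXY : X ⊆ Y) : rk M X ≤ rk M Y := by
  obtain ⟨I, hI⟩ := M.exists_isBasis' X
  rw [rk_eq_of_basis' hI]
  refine ncard_le_rk_of_subset_closure hfin hI.indep ?_
  refine (M.subset_closure I hI.indep.subset_ground).trans ?_
  rw [hI.closure_eq_closure]
  exact M.closure_subset_closure hXY

lemma rk_closure_eq (X : Set α) : rk M (M.closure X) = rk M X := by
  obtain ⟨I, hI⟩ := M.exists_isBasis' X
  rw [rk_eq_of_basis' hI, rk_eq_of_basis hI.isBasis_closure_right]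

lemma rk_indep_eq {I : Set α} (hI : M.Indep I) : rk M I = I.ncard :=
  rk_eq_of_basis (hI.isBasis_self)

lemma rk_le_ncard {X : Set α} (hXfin : X.Finite) : rk M X ≤ X.ncard := by
  obtain ⟨I, hI⟩ := M.exists_isBasis' X
  rw [rk_eq_of_basis' hI]
  exact Set.ncard_le_ncard hI.subset hXfin

lemma rk_submod (hfin : M.E.Finite) (X Y : Set α) (hX : X ⊆ M.E) (hY : Y ⊆ M.E) :
    rk M (X ∪ Y) + rk M (X ∩ Y) ≤ rk M X + rk M Y := by
  obtain ⟨I, hI⟩ := M.exists_isBasis (X ∩ Y) (inter_subset_left.trans hX)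
  obtain ⟨J, hJ, hIJ⟩ := hI.indep.subset_isBasis_of_subset
    (hI.subset.trans (inter_subset_left.trans subset_union_left)) (union_subset hX hY)
  have hJfin : J.Finite := hfin.subset hJ.indep.subset_ground
  have h1 : rk M (X ∪ Y) = J.ncard := rk_eq_of_basis hJ
  have h2 : rk M (X ∩ Y) = I.ncard := rk_eq_of_basis hI
  have hJA : (J ∩ X).ncard ≤ rk M X := by
    refine ncard_le_rk_of_subset_closure hfin (hJ.indep.inter_right X) ?_
    exact inter_subset_right.trans (M.subset_closure X hX)
  have hJB : (J ∩ Y).ncard ≤ rk M Y := by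
    refine ncard_le_rk_of_subset_closure hfin (hJ.indep.inter_right Y) ?_
    exact inter_subset_right.trans (M.subset_closure Y hY)
  have hunion : (J ∩ X) ∪ (J ∩ Y) = J := by
    rw [← inter_union_distrib_left]; exact inter_eq_left.2 hJ.subset
  have hIsub : I ⊆ J ∩ X ∩ (J ∩ Y) := by
    intro a ha
    exact ⟨⟨hIJ ha, (hI.subset ha).1⟩, hIJ ha, (hI.subset ha).2⟩
  have key : ((J ∩ X) ∪ (J ∩ Y)).ncard + ((J ∩ X) ∩ (J ∩ Y)).ncard
      = (J ∩ X).ncard + (J ∩ Y).ncard :=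
    Set.ncard_union_add_ncard_inter _ _ (hJfin.inter_of_left X) (hJfin.inter_of_left Y)
  rw [hunion] at key
  have hIcard : I.ncard ≤ ((J ∩ X) ∩ (J ∩ Y)).ncard :=
    Set.ncard_le_ncard hIsub ((hJfin.inter_of_left X).inter_of_left _)
  omega


lemma mem_closure_inter_of_indep {T S₁ S₂ : Set α} (hT : M.Indep T)
    (h1 : S₁ ⊆ T) (h2 : S₂ ⊆ T) {y : α}
    (hy1 : y ∈ M.closure S₁) (hy2 : y ∈ M.closure S₂) : y ∈ M.closure (S₁ ∩ S₂) := by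
  have : M.Indep (S₁ ∪ S₂) := hT.subset (union_subset h1 h2)
  rw [this.closure_inter_eq_inter_closure]
  exact ⟨hy1, hy2⟩

lemma indep_insert_diff_iff_closure {T : Set α} (hT : M.Indep T) {u v : α}
    (hu : u ∈ T) (hv : v ∉ T) (hvE : v ∈ M.E) :
    M.Indep (insert v (T \ {u})) ↔ v ∉ M.closure (T \ {u}) := by
  rw [(hT.subset diff_subset).insert_indep_iff_of_notMem (fun hc => hv hc.1)]
  simp [hvE]

/-- Simultaneous exchange along a "no-shortcut" system, indexed by a finset of naturals. -/
lemma core_exchange (J : Finset ℕ) (T : Set α) (hT : M.Indep T) (x y : ℕ → α)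
    (hx : ∀ a ∈ J, x a ∈ T) (hy : ∀ a ∈ J, y a ∉ T)
    (hxinj : ∀ a ∈ J, ∀ b ∈ J, x a = x b → a = b)
    (hyinj : ∀ a ∈ J, ∀ b ∈ J, y a = y b → a = b)
    (hswap : ∀ a ∈ J, M.Indep (insert (y a) (T \ {x a})))
    (htri : ∀ a ∈ J, ∀ b ∈ J, a < b → y a ∈ M.closure (T \ {x b})) :
    M.Indep ((T \ (x '' J)) ∪ (y '' J)) := by
  induction J using Finset.strongInduction generalizing T with
  | _ J IH =>
  rcases J.eq_empty_or_nonempty with rfl | hJne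
  · simpa using hT
  set t := J.max' hJne with ht
  have htJ : t ∈ J := J.max'_mem hJne
  set J' := J.erase t with hJ'
  have hJ'ss : J' ⊂ J := Finset.erase_ssubset htJ
  have hmemJ : ∀ a ∈ J', a ∈ J := fun a ha => Finset.mem_of_mem_erase ha
  have hltt : ∀ a ∈ J', a < t := by
    intro a ha
    exact lt_of_le_of_ne (J.le_max' a (hmemJ a ha)) (Finset.ne_of_mem_erase ha)
  have hyE : ∀ a, a ∈ J → y a ∈ M.E := fun a ha =>
    (hswap a ha).subset_ground (mem_insert _ _)
  set T₁ := insert (y t) (T \ {x t}) with hT₁def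
  have hT₁ : M.Indep T₁ := hswap t htJ
  have hytE : y t ∉ M.closure (T \ {x t}) := by
    rw [← indep_insert_diff_iff_closure hT (hx t htJ) (hy t htJ) (hyE t htJ)]
    exact hT₁
  have hx1 : ∀ a ∈ J', x a ∈ T₁ := by
    intro a ha
    refine mem_insert_of_mem _ ⟨hx a (hmemJ a ha), ?_⟩
    simp only [mem_singleton_iff]
    intro hc
    exact absurd (hxinj a (hmemJ a ha) t htJ hc) (Nat.ne_of_lt (hltt a ha))
  have hy1 : ∀ a ∈ J', y a ∉ T₁ := by
    intro a ha hc
    rcases hc with hc | hc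
    · exact absurd (hyinj a (hmemJ a ha) t htJ hc) (Nat.ne_of_lt (hltt a ha))
    · exact hy a (hmemJ a ha) hc.1
  have hsub1 : ∀ a, T \ {x a, x t} ⊆ T₁ \ {x a} := by
    intro a z hz
    refine ⟨mem_insert_of_mem _ ⟨hz.1, fun hc => hz.2 (by simp [hc])⟩, fun hc => hz.2 ?_⟩
    simp only [mem_singleton_iff] at hc
    simp [hc]
  have hT₁diff : ∀ a ∈ J', T₁ \ {x a} = insert (y t) (T \ {x a, x t}) := by
    intro a ha
    have hne : y t ≠ x a := fun hc => hy t htJ (hc ▸ hx a (hmemJ a ha))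
    rw [hT₁def, insert_diff_of_notMem _ (by simpa using hne)]
    congr 1
    rw [diff_diff]
    congr 1
    ext z; simp only [mem_union, mem_singleton_iff, mem_insert_iff]; tauto
  have hswap1 : ∀ a ∈ J', M.Indep (insert (y a) (T₁ \ {x a})) := by
    intro a ha
    have haJ := hmemJ a ha
    by_contra hc
    rw [indep_insert_diff_iff_closure hT₁ (hx1 a ha) (hy1 a ha) (hyE a haJ),
      not_not] at hc
    rw [hT₁diff a ha] at hc
    have hyaa : y a ∉ M.closure (T \ {x a}) := by
      rw [← indep_insert_diff_iff_closure hT (hx a haJ) (hy a haJ) (hyE a haJ)]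
      exact hswap a haJ
    have hya : y a ∉ M.closure (T \ {x a, x t}) := by
      intro hmem
      refine hyaa (M.closure_subset_closure ?_ hmem)
      intro z hz
      refine ⟨hz.1, fun hc' => hz.2 ?_⟩
      simp only [mem_singleton_iff] at hc'
      simp [hc']
    have hexch := Matroid.closure_exchange (M := M) (X := T \ {x a, x t})
      (e := y a) (f := y t) ⟨hc, hya⟩
    have htri_at : y a ∈ M.closure (T \ {x t}) := htri a haJ t htJ (hltt a ha)
    have hsub : insert (y a) (T \ {x a, x t}) ⊆ M.closure (T \ {x t}) := by
      refine insert_subset htri_at ?_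
      refine subset_trans ?_ (M.subset_closure (T \ {x t})
        ((hT.subset diff_subset).subset_ground))
      intro z hz
      exact ⟨hz.1, fun hc' => hz.2 (by simp only [mem_singleton_iff] at hc'; simp [hc'])⟩
    have := (M.closure_subset_closure_of_subset_closure hsub) hexch.1
    exact hytE this
  have htri1 : ∀ a ∈ J', ∀ b ∈ J', a < b → y a ∈ M.closure (T₁ \ {x b}) := by
    intro a ha b hb hab
    have h1 : y a ∈ M.closure (T \ {x b}) := htri a (hmemJ a ha) b (hmemJ b hb) hab
    have h2 : y a ∈ M.closure (T \ {x t}) := htri a (hmemJ a ha) t htJ (hltt a ha)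
    have h3 := mem_closure_inter_of_indep hT diff_subset diff_subset h1 h2
    have h4 : (T \ {x b}) ∩ (T \ {x t}) = T \ {x b, x t} := by
      ext z
      simp only [mem_inter_iff, mem_diff, mem_singleton_iff, mem_insert_iff]
      tauto
    rw [h4] at h3
    exact M.closure_subset_closure (hsub1 b) h3
  have hres := IH J' hJ'ss T₁ hT₁ hx1 hy1
    (fun a ha b hb h => hxinj a (hmemJ a ha) b (hmemJ b hb) h)
    (fun a ha b hb h => hyinj a (hmemJ a ha) b (hmemJ b hb) h)
    hswap1 htri1
  have hcoe : (J : Set ℕ) = insert t ((J' : Set ℕ)) := by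
    rw [hJ', Finset.coe_erase, Set.insert_diff_singleton,
      Set.insert_eq_self.2 (by exact_mod_cast htJ)]
  have hximage : (x '' J) = insert (x t) (x '' (J' : Set ℕ)) := by
    rw [hcoe, image_insert_eq]
  have hyimage : (y '' J) = insert (y t) (y '' (J' : Set ℕ)) := by
    rw [hcoe, image_insert_eq]
  have hytnotx : y t ∉ x '' (J' : Set ℕ) := by
    rintro ⟨a, ha, he⟩
    exact hy t htJ (he ▸ hx a (hmemJ a ha))
  have hseteq : (T₁ \ (x '' J')) ∪ (y '' J')
      = (T \ (x '' J)) ∪ (y '' J) := by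
    rw [hximage, hyimage, hT₁def]
    ext z
    simp only [mem_union, mem_diff, mem_insert_iff, mem_singleton_iff, not_or]
    constructor
    · rintro (⟨(rfl | ⟨hzT, hzx⟩), hzim⟩ | h)
      · exact Or.inr (Or.inl rfl)
      · exact Or.inl ⟨hzT, hzx, hzim⟩
      · exact Or.inr (Or.inr h)
    · rintro (⟨hzT, hzx, hzim⟩ | (rfl | h))
      · exact Or.inl ⟨Or.inr ⟨hzT, hzx⟩, hzim⟩
      · exact Or.inl ⟨Or.inl rfl, hytnotx⟩
      · exact Or.inr h
  rw [← hseteq]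
  exact hres

/-- `y` is in the closure of the set of elements of `T` that it "depends on". -/
lemma mem_closure_fundSet {T : Set α} (hT : M.Indep T) {y : α}
    (hy : y ∈ M.closure T) :
    y ∈ M.closure {x ∈ T | y ∉ M.closure (T \ {x})} := by
  set D := {x ∈ T | y ∉ M.closure (T \ {x})} with hD
  rcases (T \ D).eq_empty_or_nonempty with h | h
  · have hTD : T ⊆ D := by
      intro a ha
      by_contra hc
      exact (Set.eq_empty_iff_forall_notMem.1 h a) ⟨ha, hc⟩
    exact M.closure_subset_closure hTD hy
  · have hiUnion : M.Indep (⋃ x ∈ (T \ D), (T \ {x})) := by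
      refine hT.subset ?_
      simp only [iUnion_subset_iff]
      exact fun x _ => diff_subset
    have hbi := M.closure_biInter_eq_biInter_closure_of_biUnion_indep h
      (I := fun x => T \ {x}) hiUnion
    have hymem : y ∈ ⋂ x ∈ (T \ D), M.closure (T \ {x}) := by
      simp only [mem_iInter]
      intro x hx
      by_contra hc
      exact hx.2 ⟨hx.1, hc⟩
    rw [← hbi] at hymem
    refine M.closure_subset_closure ?_ hymem
    intro a ha
    simp only [mem_iInter] at ha
    obtain ⟨x₀, hx₀⟩ := h
    have haT : a ∈ T := ((ha x₀ hx₀)).1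
    by_contra hc
    exact ((ha a ⟨haT, hc⟩).2) rfl


lemma rk_eq_of_base_subset (hfin : M.E.Finite) {B0 S : Set α} (hB0 : M.IsBase B0)
    (hsub : B0 ⊆ S) (hS : S ⊆ M.E) : rk M S = B0.ncard := by
  refine le_antisymm ?_ ?_
  · calc rk M S ≤ rk M M.E := rk_mono hfin hS
      _ = B0.ncard := rk_eq_of_basis hB0.isBasis_ground
  · rw [← rk_indep_eq hB0.indep]
    exact rk_mono hfin hsub

/-- The submodular chain inequality. -/
lemma chain_ineq (hfin : M.E.Finite) {B R : Set α} (hB : M.IsBase B) (hR : R ⊆ M.E)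
    {k : ℕ} (Bp : Fin k → Set α) (hBsub : ∀ i, Bp i ⊆ B)
    (hdisj : ∀ i j, i ≠ j → Disjoint (Bp i) (Bp j)) (s : Finset (Fin k)) :
    s.card * B.ncard + rk M (R ∪ (B \ ⋃ i ∈ s, Bp i))
      ≤ (∑ i ∈ s, rk M (R ∪ (B \ Bp i))) + B.ncard := by
  induction s using Finset.induction_on with
  | empty =>
    simp only [Finset.card_empty, zero_mul, Finset.sum_empty, zero_add, zero_le,
      Finset.notMem_empty, iUnion_of_empty, iUnion_empty, diff_empty]
    rw [rk_eq_of_base_subset hfin hB subset_union_right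
      (union_subset hR hB.subset_ground)]
  | @insert j s hjs IH =>
    have hXY : (R ∪ (B \ ⋃ i ∈ s, Bp i)) ∪ (R ∪ (B \ Bp j)) = R ∪ B := by
      rw [← union_union_distrib_left, ← diff_inter]
      congr 1
      have : (⋃ i ∈ s, Bp i) ∩ Bp j = ∅ := by
        rw [eq_empty_iff_forall_notMem]
        rintro z ⟨hz1, hz2⟩
        simp only [mem_iUnion] at hz1
        obtain ⟨i, hi, hzi⟩ := hz1
        exact (hdisj i j (fun hc => hjs (hc ▸ hi))).ne_of_mem hzi hz2 rfl
      rw [this, diff_empty]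
    have hint : R ∪ (B \ ⋃ i ∈ Insert.insert j s, Bp i)
        ⊆ (R ∪ (B \ ⋃ i ∈ s, Bp i)) ∩ (R ∪ (B \ Bp j)) := by
      rintro z (hz | hz)
      · exact ⟨Or.inl hz, Or.inl hz⟩
      · constructor
        · refine Or.inr ⟨hz.1, fun hc => hz.2 ?_⟩
          simp only [mem_iUnion] at hc ⊢
          obtain ⟨i, hi, hzi⟩ := hc
          exact ⟨i, Finset.mem_insert_of_mem hi, hzi⟩
        · refine Or.inr ⟨hz.1, fun hc => hz.2 ?_⟩
          simp only [mem_iUnion]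
          exact ⟨j, Finset.mem_insert_self j s, hc⟩
    have hsm := rk_submod hfin (R ∪ (B \ ⋃ i ∈ s, Bp i)) (R ∪ (B \ Bp j))
      (union_subset hR (diff_subset.trans hB.subset_ground))
      (union_subset hR (diff_subset.trans hB.subset_ground))
    rw [hXY] at hsm
    have h1 : rk M (R ∪ B) = B.ncard :=
      rk_eq_of_base_subset hfin hB subset_union_right (union_subset hR hB.subset_ground)
    have h2 : rk M (R ∪ (B \ ⋃ i ∈ Insert.insert j s, Bp i))
        ≤ rk M ((R ∪ (B \ ⋃ i ∈ s, Bp i)) ∩ (R ∪ (B \ Bp j))) := rk_mono hfin hint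
    rw [Finset.sum_insert hjs, Finset.card_insert_of_notMem hjs]
    have hmul : (s.card + 1) * B.ncard = s.card * B.ncard + B.ncard := by ring
    rw [hmul]
    have := IH
    omega


/-- cardinality of a disjoint union over a finset -/
lemma ncard_biUnion {k : ℕ} (s : Finset (Fin k)) (f : Fin k → Set α)
    (hfin : ∀ i, (f i).Finite)
    (hdisj : ∀ i j, i ≠ j → Disjoint (f i) (f j)) :
    (⋃ i ∈ s, f i).ncard = ∑ i ∈ s, (f i).ncard := by
  induction s using Finset.induction_on with
  | empty => simp
  | @insert j s hjs IH =>
    rw [Finset.set_biUnion_insert, Finset.sum_insert hjs, ← IH]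
    refine Set.ncard_union_eq ?_ (hfin j) ?_
    · refine Set.disjoint_iUnion₂_right.2 (fun i hi => hdisj j i (fun hc => hjs (hc ▸ hi)))
    · exact Set.Finite.biUnion (Set.finite_mem_finset s) (fun i _ => hfin i)


variable (M) in
def Tst {k : ℕ} (B : Set α) (Bp : Fin k → Set α) (Ap : Fin k → Set α) (i : Fin k) : Set α :=
  (B \ Bp i) ∪ Ap i

variable (M) in
def Valid {k : ℕ} (B : Set α) (Bp : Fin k → Set α) (A : Set α) (Ap : Fin k → Set α) : Prop :=
  (∀ i, Ap i ⊆ A) ∧ (∀ i j, i ≠ j → Disjoint (Ap i) (Ap j)) ∧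
  (∀ i, Disjoint (Ap i) (B \ Bp i)) ∧ (∀ i, M.Indep (Tst B Bp Ap i))

variable (M) in
def Wk {k : ℕ} (B : Set α) (Bp : Fin k → Set α) (F : Set α) (Ap : Fin k → Set α)
    (m : ℕ) (s : ℕ → α) (ix : ℕ → Fin k) : Prop :=
  s 0 ∈ F ∧ ∀ j, 1 ≤ j → j ≤ m →
    (s j ∈ Ap (ix j) ∧ s (j-1) ∉ Tst B Bp Ap (ix j) ∧
     s (j-1) ∈ M.closure (Tst B Bp Ap (ix j)) ∧
     M.Indep (insert (s (j-1)) ((Tst B Bp Ap (ix j)) \ {s j})))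


lemma wk_trunc {k : ℕ} {B F : Set α} {Bp Ap : Fin k → Set α} {m : ℕ} {s : ℕ → α}
    {ix : ℕ → Fin k} (h : Wk M B Bp F Ap m s ix) {a : ℕ} (ham : a ≤ m) :
    Wk M B Bp F Ap a s ix :=
  ⟨h.1, fun j h1 h2 => h.2 j h1 (h2.trans ham)⟩


lemma wk_splice {k : ℕ} {B F : Set α} {Bp Ap : Fin k → Set α} {m : ℕ} {s : ℕ → α}
    {ix : ℕ → Fin k}
    (h : Wk M B Bp F Ap m s ix) {p q : ℕ} (hp : 1 ≤ p) (hpq : p ≤ q) (hq : q ≤ m)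
    (harc : s q ∈ Ap (ix q) ∧ s (p-1) ∉ Tst B Bp Ap (ix q) ∧
      s (p-1) ∈ M.closure (Tst B Bp Ap (ix q)) ∧
      M.Indep (insert (s (p-1)) ((Tst B Bp Ap (ix q)) \ {s q}))) :
    Wk M B Bp F Ap (m - (q - p)) (fun j => if j < p then s j else s (j + (q - p)))
      (fun j => if j < p then ix j else ix (j + (q - p)))
    ∧ (fun j => if j < p then s j else s (j + (q - p))) (m - (q - p)) = s m := by
  constructor
  · constructor
    · simp only [if_pos (by omega : 0 < p)]
      exact h.1
    · intro j h1 h2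
      by_cases hjp : j < p
      · have hj1 : j - 1 < p := by omega
        simp only [if_pos hjp, if_pos hj1]
        exact h.2 j h1 (by omega)
      · by_cases hjeq : j = p
        · have hj1 : j - 1 < p := by omega
          simp only [if_neg hjp, if_pos hj1]
          have hplus : j + (q - p) = q := by omega
          rw [hplus, hjeq]
          exact harc
        · have hj1 : ¬ (j - 1 < p) := by omega
          simp only [if_neg hjp, if_neg hj1]
          have h1' : 1 ≤ j + (q - p) := by omega
          have h2' : j + (q - p) ≤ m := by omega
          have heq : j - 1 + (q - p) = j + (q - p) - 1 := by omega
          rw [heq]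
          exact h.2 (j + (q - p)) h1' h2'
  · have hc : ¬ (m - (q - p) < p) := by omega
    simp only [if_neg hc]
    congr 1
    omega




set_option maxHeartbeats 1000000 in
lemma augment (hfin : M.E.Finite) {A B : Set α} (hA : M.IsBase A) (hB : M.IsBase B)
    {k : ℕ} {Bp : Fin k → Set α} (hk : 0 < k)
    (hdisj : ∀ i j, i ≠ j → Disjoint (Bp i) (Bp j)) (hunion : (⋃ i, Bp i) = B)
    {Ap : Fin k → Set α} (hv : Valid M B Bp A Ap)
    (hne : (A \ ⋃ i, Ap i).Nonempty) :
    ∃ Ap', Valid M B Bp A Ap' ∧ ∑ i, (Ap' i).ncard = (∑ i, (Ap i).ncard) + 1 := by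
  classical
  obtain ⟨hApA, hApd, hApB, hApI⟩ := hv
  set F := A \ ⋃ i, Ap i with hF
  set T := Tst B Bp Ap with hT
  have hBpB : ∀ i, Bp i ⊆ B := fun i => hunion ▸ subset_iUnion Bp i
  have hTE : ∀ i, T i ⊆ M.E := fun i =>
    union_subset (diff_subset.trans hB.subset_ground) ((hApA i).trans hA.subset_ground)
  have hAE : A ⊆ M.E := hA.subset_ground
  have hAfin : A.Finite := hfin.subset hAE
  have hFA : F ⊆ A := diff_subset
  have hsuccess : ∃ m s ix, Wk M B Bp F Ap m s ix ∧ ∃ j, s m ∉ M.closure (T j) := by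
    by_contra hnos
    push_neg at hnos
    set R := {v | ∃ m s ix, Wk M B Bp F Ap m s ix ∧ s m = v} with hR
    have hFR : F ⊆ R := by
      intro f hf
      exact ⟨0, fun _ => f, fun _ => ⟨0, hk⟩, ⟨hf, fun j h1 h2 => by omega⟩, rfl⟩
    have hRA : R ⊆ A := by
      rintro v ⟨m, s, ix, hw, rfl⟩
      rcases Nat.eq_zero_or_pos m with rfl | hm
      · exact hFA hw.1
      · exact hApA _ (hw.2 m hm le_rfl).1
    have hRcl : ∀ v ∈ R, ∀ i, v ∈ M.closure (T i) := by
      rintro v ⟨m, s, ix, hw, rfl⟩ i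
      exact hnos m s ix hw i
    have hRext : ∀ i, R ⊆ M.closure ((B \ Bp i) ∪ (Ap i ∩ R)) := by
      intro i v hvR
      have hsubE : (B \ Bp i) ∪ (Ap i ∩ R) ⊆ M.E :=
        union_subset (diff_subset.trans hB.subset_ground)
          ((inter_subset_left).trans ((hApA i).trans hAE))
      by_cases hvT : v ∈ T i
      · rcases hvT with hvB | hvA
        · exact M.subset_closure _ hsubE (Or.inl hvB)
        · exact M.subset_closure _ hsubE (Or.inr ⟨hvA, hvR⟩)
      · have hvcl := hRcl v hvR i
        have hD := mem_closure_fundSet (hApI i) hvcl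
        refine M.closure_subset_closure ?_ hD
        rintro x ⟨hxT, hxcl⟩
        rcases hxT with hxB | hxA
        · exact Or.inl hxB
        · refine Or.inr ⟨hxA, ?_⟩
          obtain ⟨m, s, ix, hw, hsm⟩ := hvR
          refine ⟨m+1, fun j => if j = m+1 then x else s j,
            fun j => if j = m+1 then i else ix j, ⟨?_, ?_⟩, by simp⟩
          · simpa using hw.1
          · intro j h1 h2
            by_cases hj : j = m + 1
            · subst hj
              have hj1 : m + 1 - 1 = m := by omega
              simp only [hj1, if_neg (show ¬ m = m + 1 by omega), eq_self_iff_true,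
                if_true, hsm]
              refine ⟨hxA, hvT, hvcl, ?_⟩
              rw [indep_insert_diff_iff_closure (hApI i) (Or.inr hxA)
                hvT (hAE (hRA ⟨m, s, ix, hw, hsm⟩))]
              exact hxcl
            · have hj1 : ¬ (j - 1 = m + 1) := by omega
              simp only [if_neg hj, if_neg hj1]
              exact hw.2 j h1 (by omega)
    -- counting
    have hRE : R ⊆ M.E := hRA.trans hAE
    have hRind : M.Indep R := hA.indep.subset hRA
    have hRfin : R.Finite := hAfin.subset hRA
    have hTfin : ∀ i, (T i).Finite := fun i => hfin.subset (hTE i)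
    have hperi : ∀ i, rk M (R ∪ (B \ Bp i)) ≤ (B \ Bp i).ncard + (Ap i ∩ R).ncard := by
      intro i
      have h1 : R ∪ (B \ Bp i) ⊆ M.closure ((B \ Bp i) ∪ (Ap i ∩ R)) := by
        refine union_subset (hRext i) ?_
        refine subset_trans ?_ (M.subset_closure _ (union_subset
          (diff_subset.trans hB.subset_ground) ((inter_subset_left).trans ((hApA i).trans hAE))))
        exact subset_union_left
      calc rk M (R ∪ (B \ Bp i))
          ≤ rk M (M.closure ((B \ Bp i) ∪ (Ap i ∩ R))) := rk_mono hfin h1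
        _ = rk M ((B \ Bp i) ∪ (Ap i ∩ R)) := rk_closure_eq _
        _ ≤ ((B \ Bp i) ∪ (Ap i ∩ R)).ncard := rk_le_ncard
            ((hfin.subset (diff_subset.trans hB.subset_ground)).union (hRfin.subset
              inter_subset_right))
        _ ≤ (B \ Bp i).ncard + (Ap i ∩ R).ncard := Set.ncard_union_le _ _
    have hchain := chain_ineq hfin hB hRE Bp hBpB hdisj Finset.univ
    have huniv : (⋃ i ∈ (Finset.univ : Finset (Fin k)), Bp i) = B := by
      rw [← hunion]; simp
    rw [huniv, diff_self, union_empty] at hchain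
    have hrkR : rk M R = R.ncard := rk_indep_eq hRind
    have hsum_le : (∑ i, rk M (R ∪ (B \ Bp i)))
        ≤ (∑ i : Fin k, (B \ Bp i).ncard) + ∑ i : Fin k, (Ap i ∩ R).ncard := by
      rw [← Finset.sum_add_distrib]
      exact Finset.sum_le_sum (fun i _ => hperi i)
    have hBfin : B.Finite := hfin.subset hB.subset_ground
    have hdiffcard : ∀ i : Fin k, (B \ Bp i).ncard + (Bp i).ncard = B.ncard := by
      intro i
      rw [Set.ncard_diff_add_ncard_of_subset (hBpB i) hBfin]
    have hBpsum : (∑ i : Fin k, (Bp i).ncard) = B.ncard := by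
      rw [← ncard_biUnion Finset.univ Bp (fun i => hBfin.subset (hBpB i)) hdisj, huniv]
    have hsum_eq : (∑ i : Fin k, (B \ Bp i).ncard) + B.ncard = k * B.ncard := by
      have h1 : (∑ i : Fin k, ((B \ Bp i).ncard + (Bp i).ncard)) = k * B.ncard := by
        rw [Finset.sum_congr rfl (fun i _ => hdiffcard i), Finset.sum_const,
          Finset.card_univ, smul_eq_mul, Fintype.card_fin]
      rw [Finset.sum_add_distrib, hBpsum] at h1
      exact h1
    have hApRsum : (∑ i : Fin k, (Ap i ∩ R).ncard) + F.ncard ≤ R.ncard := by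
      have h1 : (⋃ i ∈ (Finset.univ : Finset (Fin k)), (Ap i ∩ R)) ⊆ R \ F := by
        intro v hv
        simp only [Finset.mem_univ, iUnion_true, mem_iUnion] at hv
        obtain ⟨i, hvi, hvR⟩ := hv
        exact ⟨hvR, fun hc => hc.2 (mem_iUnion.2 ⟨i, hvi⟩)⟩
      have h2 : (⋃ i ∈ (Finset.univ : Finset (Fin k)), (Ap i ∩ R)).ncard
          = ∑ i : Fin k, (Ap i ∩ R).ncard :=
        ncard_biUnion (Finset.univ : Finset (Fin k)) (fun i => Ap i ∩ R)
          (fun i => hRfin.subset inter_subset_right)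
          (fun i j hij => ((hApd i j hij).mono inter_subset_left inter_subset_left))
      have h3 : (⋃ i ∈ (Finset.univ : Finset (Fin k)), (Ap i ∩ R)).ncard ≤ (R \ F).ncard :=
        Set.ncard_le_ncard h1 (hRfin.diff)
      have h4 : (R \ F).ncard + F.ncard = R.ncard :=
        Set.ncard_diff_add_ncard_of_subset hFR hRfin
      omega
    have hFpos : 0 < F.ncard := (Set.ncard_pos (hAfin.subset hFA)).2 hne
    have hkcard : (Finset.univ : Finset (Fin k)).card = k := by simp
    rw [hkcard, hrkR] at hchain
    omega
  classical
  obtain ⟨m₁, s₁, ix₁, hw₁, hsucc₁⟩ := hsuccess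
  have hPex : ∃ m : ℕ, ∃ s ix, Wk M B Bp F Ap m s ix ∧ ∃ j, s m ∉ M.closure (T j) :=
    ⟨m₁, s₁, ix₁, hw₁, hsucc₁⟩
  set m₀ := Nat.find hPex with hm₀
  obtain ⟨s, ix, hw, jstar, hjstar⟩ := Nat.find_spec hPex
  have hmin : ∀ m', m' < m₀ → ¬ (∃ s ix, Wk M B Bp F Ap m' s ix ∧ ∃ j, s m' ∉ M.closure (T j)) :=
    fun m' h => Nat.find_min hPex h
  have hSA : ∀ j, j ≤ m₀ → s j ∈ A := by
    intro j hj
    rcases Nat.eq_zero_or_pos j with rfl | hj1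
    · exact hFA hw.1
    · exact hApA _ (hw.2 j hj1 hj).1
  have hinj : ∀ a b, a ≤ m₀ → b ≤ m₀ → a < b → s a = s b → False := by
    intro a b ha hb hab heq
    rcases Nat.lt_or_ge b m₀ with hbm | hbm
    · have horig := hw.2 (b+1) (by omega) (by omega)
      have hidx2 : (b+1) - 1 = b := by omega
      rw [hidx2] at horig
      have harc : s (b+1) ∈ Ap (ix (b+1)) ∧ s ((a+1)-1) ∉ Tst B Bp Ap (ix (b+1)) ∧
          s ((a+1)-1) ∈ M.closure (Tst B Bp Ap (ix (b+1))) ∧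
          M.Indep (insert (s ((a+1)-1)) ((Tst B Bp Ap (ix (b+1))) \ {s (b+1)})) := by
        have hidx : (a+1) - 1 = a := by omega
        rw [hidx, heq]
        exact horig
      obtain ⟨hw', hend⟩ := wk_splice hw (p := a+1) (q := b+1) (by omega) (by omega)
        (by omega) harc
      refine hmin (m₀ - ((b+1) - (a+1))) (by omega) ⟨_, _, hw', jstar, ?_⟩
      have hend' : (if m₀ - ((b+1) - (a+1)) < a+1 then s (m₀ - ((b+1) - (a+1)))
          else s (m₀ - ((b+1) - (a+1)) + ((b+1) - (a+1)))) = s m₀ := hend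
      rw [hend']
      exact hjstar
    · have hbm0 : b = m₀ := le_antisymm hb hbm
      refine hmin a (by omega) ⟨s, ix, wk_trunc hw (by omega), jstar, ?_⟩
      rw [heq, hbm0]
      exact hjstar
  have hinj' : ∀ a b, a ≤ m₀ → b ≤ m₀ → s a = s b → a = b := by
    intro a b ha hb heq
    rcases lt_trichotomy a b with h | h | h
    · exact absurd (hinj a b ha hb h heq) not_false
    · exact h
    · exact absurd (hinj b a hb ha h heq.symm) not_false
  have hclE : ∀ i, M.closure (T i) ⊆ M.E := fun i => M.closure_subset_ground _
  have hshort : ∀ p q, 1 ≤ p → p < q → q ≤ m₀ → ix p = ix q →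
      s (p-1) ∈ M.closure (T (ix q) \ {s q}) := by
    intro p q hp hpq hq hixeq
    by_contra hcon
    have horigp := hw.2 p hp (by omega)
    have horigq := hw.2 q (by omega) hq
    have harc : s q ∈ Ap (ix q) ∧ s (p-1) ∉ Tst B Bp Ap (ix q) ∧
        s (p-1) ∈ M.closure (Tst B Bp Ap (ix q)) ∧
        M.Indep (insert (s (p-1)) ((Tst B Bp Ap (ix q)) \ {s q})) := by
      refine ⟨horigq.1, hixeq ▸ horigp.2.1, hixeq ▸ horigp.2.2.1, ?_⟩
      rw [indep_insert_diff_iff_closure (hApI (ix q)) (Or.inr horigq.1)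
        (hixeq ▸ horigp.2.1) (hclE (ix p) horigp.2.2.1)]
      exact hcon
    obtain ⟨hw', hend⟩ := wk_splice hw (p := p) (q := q) hp (le_of_lt hpq) hq harc
    refine hmin (m₀ - (q - p)) (by omega) ⟨_, _, hw', jstar, ?_⟩
    have hend' : (if m₀ - (q - p) < p then s (m₀ - (q - p))
        else s (m₀ - (q - p) + (q - p))) = s m₀ := hend
    rw [hend']
    exact hjstar
  set Ji : Fin k → Finset ℕ := fun i => (Finset.Icc 1 m₀).filter (fun j => ix j = i) with hJi
  have hJmem : ∀ i j, j ∈ Ji i ↔ (1 ≤ j ∧ j ≤ m₀ ∧ ix j = i) := by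
    intro i j
    simp only [hJi, Finset.mem_filter, Finset.mem_Icc]
    tauto
  set Xs : Fin k → Set α := fun i => s '' ((Ji i : Set ℕ)) with hXs
  set Ys : Fin k → Set α := fun i => (fun j => s (j-1)) '' ((Ji i : Set ℕ)) with hYs
  have harc' : ∀ j, 1 ≤ j → j ≤ m₀ → (s j ∈ Ap (ix j) ∧ s (j-1) ∉ T (ix j) ∧
      s (j-1) ∈ M.closure (T (ix j)) ∧ M.Indep (insert (s (j-1)) ((T (ix j)) \ {s j}))) :=
    fun j h1 h2 => hw.2 j h1 h2
  have hcore : ∀ i, M.Indep ((T i \ Xs i) ∪ Ys i) := by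
    intro i
    refine core_exchange (Ji i) (T i) (hApI i) s (fun j => s (j-1)) ?_ ?_ ?_ ?_ ?_ ?_
    · intro a ha
      rw [hJmem] at ha
      have h := (harc' a ha.1 ha.2.1).1
      rw [ha.2.2] at h
      exact Or.inr h
    · intro a ha
      rw [hJmem] at ha
      have h := (harc' a ha.1 ha.2.1).2.1
      rw [ha.2.2] at h
      exact h
    · intro a ha b hb heq
      rw [hJmem] at ha hb
      exact hinj' a b ha.2.1 hb.2.1 heq
    · intro a ha b hb heq
      rw [hJmem] at ha hb
      have := hinj' (a-1) (b-1) (by omega) (by omega) heq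
      omega
    · intro a ha
      rw [hJmem] at ha
      have h := (harc' a ha.1 ha.2.1).2.2.2
      rw [ha.2.2] at h
      exact h
    · intro a ha b hb hab
      rw [hJmem] at ha hb
      have h := hshort a b ha.1 hab hb.2.1 (by rw [ha.2.2, hb.2.2])
      rw [hb.2.2] at h
      exact h
  set Ap' : Fin k → Set α := fun i =>
    ((Ap i \ Xs i) ∪ Ys i) ∪ (if i = jstar then {s m₀} else ∅) with hAp'
  have hXsAp : ∀ i, Xs i ⊆ Ap i := by
    rintro i v ⟨j, hj, rfl⟩
    rw [Finset.mem_coe, hJmem] at hj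
    have h := (harc' j hj.1 hj.2.1).1
    rw [hj.2.2] at h
    exact h
  have hL_A : ∀ i v, v ∈ Ap i → v ∉ Xs i → ∀ l, l ≤ m₀ → s l = v → False := by
    intro i v hvA hvX l hl heq
    rcases Nat.eq_zero_or_pos l with rfl | hl1
    · exact (hw.1).2 (mem_iUnion.2 ⟨i, heq ▸ hvA⟩)
    · have h := (harc' l hl1 hl).1
      have hixl : ix l = i := by
        by_contra hc
        exact (hApd (ix l) i hc).ne_of_mem h (heq ▸ hvA) heq
      refine hvX ⟨l, ?_, heq⟩
      rw [Finset.mem_coe, hJmem]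
      exact ⟨hl1, hl, hixl⟩
  have hYs_notT : ∀ i v, v ∈ Ys i → v ∉ T i := by
    rintro i v ⟨j, hj, rfl⟩
    rw [Finset.mem_coe, hJmem] at hj
    have h := (harc' j hj.1 hj.2.1).2.1
    rw [hj.2.2] at h
    exact h
  have hYs_cl : ∀ i, Ys i ⊆ M.closure (T i) := by
    rintro i v ⟨j, hj, rfl⟩
    rw [Finset.mem_coe, hJmem] at hj
    have h := (harc' j hj.1 hj.2.1).2.2.1
    rw [hj.2.2] at h
    exact h
  have hYsA : ∀ i, Ys i ⊆ A := by
    rintro i v ⟨j, hj, rfl⟩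
    rw [Finset.mem_coe, hJmem] at hj
    exact hSA (j-1) (by omega)
  have hsmT : s m₀ ∉ T jstar := fun hc =>
    hjstar (M.subset_closure _ (hTE jstar) hc)
  have hsm_cases : ∀ i v, v ∈ Ap' i →
      (v ∈ Ap i ∧ v ∉ Xs i) ∨ (∃ l, l ∈ Ji i ∧ s (l-1) = v) ∨ (i = jstar ∧ v = s m₀) := by
    intro i v hv
    rcases hv with (h | h) | h
    · exact Or.inl ⟨h.1, h.2⟩
    · exact Or.inr (Or.inl (by obtain ⟨l, hl, rfl⟩ := h; exact ⟨l, Finset.mem_coe.1 hl, rfl⟩))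
    · by_cases hij : i = jstar
      · rw [if_pos hij] at h
        exact Or.inr (Or.inr ⟨hij, h⟩)
      · rw [if_neg hij] at h
        exact absurd h (notMem_empty v)
  -- validity of Ap'
  have hv1 : ∀ i, Ap' i ⊆ A := by
    intro i v hv
    rcases hsm_cases i v hv with h | h | h
    · exact hApA i h.1
    · obtain ⟨l, hl, rfl⟩ := h
      exact hYsA i ⟨l, Finset.mem_coe.2 hl, rfl⟩
    · exact h.2 ▸ hSA m₀ le_rfl
  have hv2 : ∀ i j, i ≠ j → Disjoint (Ap' i) (Ap' j) := by
    intro i j hij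
    rw [Set.disjoint_left]
    intro v hvi hvj
    rcases hsm_cases i v hvi with hi | hi | hi <;> rcases hsm_cases j v hvj with hj | hj | hj
    · exact (hApd i j hij).ne_of_mem hi.1 hj.1 rfl
    · obtain ⟨l, hl, heq⟩ := hj
      rw [hJmem] at hl
      exact hL_A i v hi.1 hi.2 (l-1) (by omega) heq
    · exact hL_A i v hi.1 hi.2 m₀ le_rfl hj.2.symm
    · obtain ⟨l, hl, heq⟩ := hi
      rw [hJmem] at hl
      exact hL_A j v hj.1 hj.2 (l-1) (by omega) heq
    · obtain ⟨l, hl, heql⟩ := hi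
      obtain ⟨r, hr, heqr⟩ := hj
      rw [hJmem] at hl hr
      have : l - 1 = r - 1 := hinj' (l-1) (r-1) (by omega) (by omega) (heql.trans heqr.symm)
      have hlr : l = r := by omega
      exact hij (hl.2.2.symm.trans (hlr ▸ hr.2.2))
    · obtain ⟨l, hl, heql⟩ := hi
      rw [hJmem] at hl
      have : l - 1 = m₀ := hinj' (l-1) m₀ (by omega) le_rfl (heql.trans hj.2)
      omega
    · exact hL_A j v hj.1 hj.2 m₀ le_rfl hi.2.symm
    · obtain ⟨l, hl, heql⟩ := hj
      rw [hJmem] at hl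
      have : l - 1 = m₀ := hinj' (l-1) m₀ (by omega) le_rfl (heql.trans hi.2)
      omega
    · exact hij (hi.1.trans hj.1.symm)
  have hv3 : ∀ i, Disjoint (Ap' i) (B \ Bp i) := by
    intro i
    rw [Set.disjoint_left]
    intro v hv hvB
    rcases hsm_cases i v hv with h | h | h
    · exact (hApB i).ne_of_mem h.1 hvB rfl
    · obtain ⟨l, hl, rfl⟩ := h
      exact hYs_notT i _ ⟨l, Finset.mem_coe.2 hl, rfl⟩ (Or.inl hvB)
    · obtain ⟨rfl, rfl⟩ := h
      exact hsmT (Or.inl hvB)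
  have hTd : ∀ i, Tst B Bp Ap' i = ((T i \ Xs i) ∪ Ys i) ∪ (if i = jstar then {s m₀} else ∅) := by
    intro i
    have hXsB : Xs i ∩ (B \ Bp i) = ∅ := by
      rw [eq_empty_iff_forall_notMem]
      rintro z ⟨hz1, hz2⟩
      exact (hApB i).ne_of_mem (hXsAp i hz1) hz2 rfl
    show (B \ Bp i) ∪ Ap' i = _
    rw [hAp']
    have h1 : (B \ Bp i) ∪ (((Ap i \ Xs i) ∪ Ys i) ∪ (if i = jstar then {s m₀} else ∅))
        = (((B \ Bp i) ∪ (Ap i \ Xs i)) ∪ Ys i) ∪ (if i = jstar then {s m₀} else ∅) := by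
      ext z
      simp only [mem_union]
      tauto
    rw [h1]
    congr 2
    have h2 : T i \ Xs i = ((B \ Bp i) \ Xs i) ∪ (Ap i \ Xs i) := union_diff_distrib
    rw [h2]
    congr 1
    rw [eq_comm, sdiff_eq_left]
    exact Set.disjoint_left.2
      (fun z hz1 hz2 => (eq_empty_iff_forall_notMem.1 hXsB z) ⟨hz2, hz1⟩)
  have hv4 : ∀ i, M.Indep (Tst B Bp Ap' i) := by
    intro i
    rw [hTd i]
    by_cases hij : i = jstar
    · rw [if_pos hij]
      have hclsub : (T i \ Xs i) ∪ Ys i ⊆ M.closure (T i) := by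
        refine union_subset ?_ (hYs_cl i)
        exact diff_subset.trans (M.subset_closure _ (hTE i))
      have hsmallcl : M.closure ((T i \ Xs i) ∪ Ys i) ⊆ M.closure (T i) :=
        M.closure_subset_closure_of_subset_closure hclsub
      have hnotin : s m₀ ∉ M.closure ((T i \ Xs i) ∪ Ys i) := fun hc =>
        hjstar (hij ▸ hsmallcl hc)
      have hunion' : ((T i \ Xs i) ∪ Ys i) ∪ {s m₀} = insert (s m₀) ((T i \ Xs i) ∪ Ys i) := by
        rw [union_singleton]
      rw [hunion']
      rw [(hcore i).insert_indep_iff_of_notMem (fun hc => hnotin (M.subset_closure _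
        ((hcore i).subset_ground) hc))]
      exact ⟨hAE (hSA m₀ le_rfl), hnotin⟩
    · rw [if_neg hij, union_empty]
      exact hcore i
  -- cardinalities
  have hJiinj : ∀ i, Set.InjOn s ((Ji i : Set ℕ)) := by
    intro i a ha b hb heq
    rw [Finset.mem_coe, hJmem] at ha hb
    exact hinj' a b ha.2.1 hb.2.1 heq
  have hJiinj' : ∀ i, Set.InjOn (fun j => s (j-1)) ((Ji i : Set ℕ)) := by
    intro i a ha b hb heq
    rw [Finset.mem_coe, hJmem] at ha hb
    have := hinj' (a-1) (b-1) (by omega) (by omega) heq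
    omega
  have hcard : ∀ i, (Ap' i).ncard = (Ap i).ncard + (if i = jstar then 1 else 0) := by
    intro i
    have hfinAp : (Ap i).Finite := hAfin.subset (hApA i)
    have hXc : (Xs i).ncard = (Ji i).card := by
      rw [hXs]
      rw [Set.ncard_image_of_injOn (hJiinj i), Set.ncard_coe_finset]
    have hYc : (Ys i).ncard = (Ji i).card := by
      rw [hYs]
      rw [Set.ncard_image_of_injOn (hJiinj' i), Set.ncard_coe_finset]
    have hXsub : Xs i ⊆ Ap i := hXsAp i
    have hd1 : (Ap i \ Xs i).ncard + (Xs i).ncard = (Ap i).ncard :=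
      Set.ncard_diff_add_ncard_of_subset hXsub hfinAp
    have hdisjY : Disjoint (Ap i \ Xs i) (Ys i) := by
      rw [Set.disjoint_left]
      rintro v ⟨hv1', hv2'⟩ ⟨l, hl, rfl⟩
      rw [Finset.mem_coe, hJmem] at hl
      exact hL_A i _ hv1' hv2' (l-1) (by omega) rfl
    have hu1 : ((Ap i \ Xs i) ∪ Ys i).ncard = (Ap i \ Xs i).ncard + (Ys i).ncard :=
      Set.ncard_union_eq hdisjY (hfinAp.diff) (hAfin.subset (hYsA i))
    by_cases hij : i = jstar
    · have hdisj2 : Disjoint ((Ap i \ Xs i) ∪ Ys i) {s m₀} := by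
        rw [Set.disjoint_right]
        rintro v rfl
        rintro (⟨hv1', hv2'⟩ | ⟨l, hl, heq⟩)
        · exact hL_A i _ hv1' hv2' m₀ le_rfl rfl
        · rw [Finset.mem_coe, hJmem] at hl
          have := hinj' (l-1) m₀ (by omega) le_rfl heq
          omega
      have : (Ap' i).ncard = ((Ap i \ Xs i) ∪ Ys i).ncard + 1 := by
        rw [hAp']
        simp only [if_pos hij]
        rw [Set.ncard_union_eq hdisj2 ((hfinAp.diff).union (hAfin.subset (hYsA i)))
          (Set.finite_singleton _), Set.ncard_singleton]
      rw [this, hu1, hYc, if_pos hij]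
      omega
    · have : (Ap' i).ncard = ((Ap i \ Xs i) ∪ Ys i).ncard := by
        rw [hAp']
        simp only [if_neg hij, union_empty]
      rw [this, hu1, hYc, if_neg hij]
      omega
  refine ⟨Ap', ⟨hv1, hv2, hv3, hv4⟩, ?_⟩
  rw [Finset.sum_congr rfl (fun i _ => hcard i), Finset.sum_add_distrib,
    Finset.sum_ite_eq' Finset.univ jstar (fun _ => 1)]
  simp


theorem partition_exchange_into_B' (M : Matroid α) (hfin : M.E.Finite)
    (A B : Set α) (hA : M.IsBase A) (hB : M.IsBase B)
    (k : ℕ) (Bp : Fin k → Set α)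
    (hdisj : ∀ i j, i ≠ j → Disjoint (Bp i) (Bp j))
    (hunion : (⋃ i, Bp i) = B) :
    ∃ Ap : Fin k → Set α,
      (∀ i j, i ≠ j → Disjoint (Ap i) (Ap j)) ∧
      (⋃ i, Ap i) = A ∧
      ∀ i, M.IsBase ((B \ Bp i) ∪ Ap i) := by
  classical
  have hAfin : A.Finite := hfin.subset hA.subset_ground
  have hBfin : B.Finite := hfin.subset hB.subset_ground
  rcases Nat.eq_zero_or_pos k with rfl | hk
  · have hBempty : B = ∅ := by rw [← hunion]; simp
    have hA0 : A = ∅ := by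
      have hcard := hA.ncard_eq_ncard_of_isBase hB
      rw [hBempty, Set.ncard_empty] at hcard
      exact (Set.ncard_eq_zero hAfin).1 hcard
    exact ⟨fun _ => ∅, fun i => i.elim0, by rw [hA0]; simp, fun i => i.elim0⟩
  have hBpB : ∀ i, Bp i ⊆ B := fun i => hunion ▸ subset_iUnion Bp i
  have huniv : ∀ (f : Fin k → Set α), (⋃ i ∈ (Finset.univ : Finset (Fin k)), f i) = ⋃ i, f i := by
    intro f; simp
  have main : ∀ d : ℕ, ∀ Ap, Valid M B Bp A Ap → A.ncard ≤ (∑ i, (Ap i).ncard) + d →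
      ∃ Ap', Valid M B Bp A Ap' ∧ (⋃ i, Ap' i) = A := by
    intro d
    induction d with
    | zero =>
      intro Ap hv hle
      refine ⟨Ap, hv, ?_⟩
      have hsub : (⋃ i, Ap i) ⊆ A := iUnion_subset hv.1
      have hcard : (⋃ i, Ap i).ncard = ∑ i, (Ap i).ncard := by
        rw [← huniv Ap]
        exact ncard_biUnion Finset.univ Ap (fun i => hAfin.subset (hv.1 i)) hv.2.1
      exact (Set.eq_of_subset_of_ncard_le hsub (by omega) hAfin).symm |>.symm
    | succ d IH =>
      intro Ap hv hle
      by_cases hun : (⋃ i, Ap i) = A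
      · exact ⟨Ap, hv, hun⟩
      · have hne : (A \ ⋃ i, Ap i).Nonempty := by
          rw [Set.diff_nonempty]
          intro hc
          exact hun (le_antisymm (iUnion_subset hv.1) hc)
        obtain ⟨Ap', hv', hwt⟩ := augment hfin hA hB hk hdisj hunion hv hne
        exact IH Ap' hv' (by omega)
  obtain ⟨Ap, hv, hun⟩ := main A.ncard (fun _ => ∅)
    ⟨fun _ => empty_subset _, fun _ _ _ => Set.disjoint_left.2 (fun _ h => absurd h (notMem_empty _)), fun _ => Set.disjoint_left.2 (fun _ h => absurd h (notMem_empty _)),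
     fun i => by rw [Tst, union_empty]; exact hB.indep.subset diff_subset⟩
    (by simp)
  obtain ⟨hApA, hApd, hApB, hApI⟩ := hv
  have hcardAB : A.ncard = B.ncard := hA.ncard_eq_ncard_of_isBase hB
  have hsumA : (∑ i, (Ap i).ncard) = B.ncard := by
    rw [← ncard_biUnion Finset.univ Ap (fun i => hAfin.subset (hApA i)) hApd, huniv Ap, hun,
      hcardAB]
  have hsumB : (∑ i : Fin k, (Bp i).ncard) = B.ncard := by
    rw [← ncard_biUnion Finset.univ Bp (fun i => hBfin.subset (hBpB i)) hdisj, huniv Bp, hunion]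
  have hdiffcard : ∀ i : Fin k, (B \ Bp i).ncard + (Bp i).ncard = B.ncard := fun i =>
    Set.ncard_diff_add_ncard_of_subset (hBpB i) hBfin
  have hTcard : ∀ i, ((B \ Bp i) ∪ Ap i).ncard = (B \ Bp i).ncard + (Ap i).ncard := by
    intro i
    exact Set.ncard_union_eq ((hApB i).symm) (hBfin.diff) (hAfin.subset (hApA i))
  have hTle : ∀ i, ((B \ Bp i) ∪ Ap i).ncard ≤ B.ncard := by
    intro i
    have h1 : rk M ((B \ Bp i) ∪ Ap i) = ((B \ Bp i) ∪ Ap i).ncard := rk_indep_eq (hApI i)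
    have h2 : rk M ((B \ Bp i) ∪ Ap i) ≤ rk M M.E := rk_mono hfin (hApI i).subset_ground
    have h3 : rk M M.E = B.ncard := rk_eq_of_basis hB.isBasis_ground
    omega
  have hsumT : (∑ i : Fin k, ((B \ Bp i) ∪ Ap i).ncard) = k * B.ncard := by
    have h1 : (∑ i : Fin k, ((B \ Bp i) ∪ Ap i).ncard)
        = (∑ i : Fin k, (B \ Bp i).ncard) + ∑ i, (Ap i).ncard := by
      rw [← Finset.sum_add_distrib]
      exact Finset.sum_congr rfl (fun i _ => hTcard i)
    have h2 : (∑ i : Fin k, ((B \ Bp i).ncard + (Bp i).ncard)) = k * B.ncard := by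
      rw [Finset.sum_congr rfl (fun i _ => hdiffcard i), Finset.sum_const, Finset.card_univ,
        smul_eq_mul, Fintype.card_fin]
    rw [Finset.sum_add_distrib, hsumB] at h2
    omega
  have hTeq : ∀ i, ((B \ Bp i) ∪ Ap i).ncard = B.ncard := by
    by_contra hc
    push_neg at hc
    obtain ⟨j, hj⟩ := hc
    have hlt : ((B \ Bp j) ∪ Ap j).ncard < B.ncard := lt_of_le_of_ne (hTle j) hj
    have := Finset.sum_lt_sum (fun i _ => hTle i) ⟨j, Finset.mem_univ j, hlt⟩
    rw [hsumT, Finset.sum_const, Finset.card_univ, smul_eq_mul, Fintype.card_fin] at this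
    omega
  refine ⟨Ap, hApd, hun, fun i => ?_⟩
  obtain ⟨B', hB', hsub⟩ := (hApI i).exists_isBase_superset
  have hB'card : B'.ncard = B.ncard := hB'.ncard_eq_ncard_of_isBase hB
  have : (B \ Bp i) ∪ Ap i = B' :=
    Set.eq_of_subset_of_ncard_le hsub (by rw [hB'card, hTeq i]) (hfin.subset hB'.subset_ground)
  rw [this]
  exact hB'

end GreeneAux

/-- For bases `A, B` of a matroid and a partition `B = B₁ ⊔ ... ⊔ B_k`, there is a
partition `A = A₁ ⊔ ... ⊔ A_k` with `(B \ B_i) ∪ A_i` a basis for every `i`. -/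
theorem partition_exchange_into_B {α : Type*} (M : Matroid α) (hfin : M.E.Finite)
    (A B : Set α) (hA : M.IsBase A) (hB : M.IsBase B)
    (k : ℕ) (Bp : Fin k → Set α)
    (hdisj : ∀ i j, i ≠ j → Disjoint (Bp i) (Bp j))
    (hunion : (⋃ i, Bp i) = B) :
    ∃ Ap : Fin k → Set α,
      (∀ i j, i ≠ j → Disjoint (Ap i) (Ap j)) ∧
      (⋃ i, Ap i) = A ∧
      ∀ i, M.IsBase ((B \ Bp i) ∪ Ap i) :=
  GreeneAux.partition_exchange_into_B' M hfin A B hA hB k Bp hdisj hunion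
end
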